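/- arXiv:2102.09626 — 4 statements merged into one kernel-verified Lean document; each statement's English description precedes it below -/
import Mathlib

section
/- Let θ̂ be any minimizer over ℝ^p of θ ↦ L(θ) + λR(θ), where L : ℝ^p → ℝ is convex and differentiable, λ > 0, and R is a norm decomposable with respect to a subspace pair (M, M̄^⊥) with M ⊆ M̄. Let φ be the subspace compatibility constant of the pair (‖·‖, R) on M̄ (assumed finite), let α > 0 and Z ≥ 0, and fix θ* ∈ ℝ^p. Assume (i) λ ≥ 2R*(∇L(θ*)), and (ii) B(θ, θ*) ≥ α‖θ − θ*‖² − Z for every θ ∈ ℝ^p with θ − θ* ∈ ℂ. Then ‖θ̂ − θ*‖² ≤ 9(λ²/α²)φ² + (1/α)(2Z + 4λ·R(θ*_{M^⊥})). -/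
/- STATEMENT 0 (Oracle inequality, Lemma 1 of the paper).  For a regularized
M-estimation problem with a decomposable regularizer R, a correctly chosen
regularization parameter λ ≥ 2R*(∇L(θ*)), and restricted strong convexity of L
over the constraint set ℂ, the estimation error satisfies
‖θ̂ − θ*‖² ≤ 9(λ²/α²)φ² + (1/α)(2Z + 4λ R(θ*_{M⊥})). -/

noncomputable section
open scoped RealInnerProductSpace

/-- Orthogonal projection of `θ` onto the subspace `N` of Euclidean space,
viewed as an element of the ambient space. -/
def proj {p : ℕ} (N : Submodule ℝ (EuclideanSpace ℝ (Fin p)))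
    (θ : EuclideanSpace ℝ (Fin p)) : EuclideanSpace ℝ (Fin p) :=
  (Submodule.orthogonalProjectionOnto N θ : EuclideanSpace ℝ (Fin p))

/-- Dual norm `R*(u) = sup { ⟨u, v⟩ : R(v) ≤ 1 }`. -/
def dualNorm {p : ℕ} (R : EuclideanSpace ℝ (Fin p) → ℝ)
    (u : EuclideanSpace ℝ (Fin p)) : ℝ :=
  sSup ((fun v => ⟪u, v⟫) '' {v | R v ≤ 1})


section aux
variable {p : ℕ} {R : EuclideanSpace ℝ (Fin p) → ℝ}

lemma Raux_zero (hs : ∀ (c : ℝ) (u), R (c • u) = |c| * R u) : R 0 = 0 := by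
  simpa using hs 0 0

lemma Raux_neg (hs : ∀ (c : ℝ) (u), R (c • u) = |c| * R u) (u) : R (-u) = R u := by
  simpa using hs (-1) u

lemma Raux_nonneg (ht : ∀ u v, R (u + v) ≤ R u + R v)
    (hs : ∀ (c : ℝ) (u), R (c • u) = |c| * R u) (u) : 0 ≤ R u := by
  have h2 := ht u (-u)
  rw [add_neg_cancel, Raux_zero hs, Raux_neg hs] at h2
  linarith

lemma Raux_sum (ht : ∀ u v, R (u + v) ≤ R u + R v)
    (hs : ∀ (c : ℝ) (u), R (c • u) = |c| * R u)
    (s : Finset (Fin p)) (f : Fin p → EuclideanSpace ℝ (Fin p)) :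
    R (∑ i ∈ s, f i) ≤ ∑ i ∈ s, R (f i) := by
  classical
  induction s using Finset.induction with
  | empty => simp [Raux_zero hs]
  | insert a s h ih =>
    rw [Finset.sum_insert h, Finset.sum_insert h]
    exact le_trans (ht _ _) (by linarith)

lemma Raux_upper (ht : ∀ u v, R (u + v) ≤ R u + R v)
    (hs : ∀ (c : ℝ) (u), R (c • u) = |c| * R u) :
    ∃ C : ℝ, 0 ≤ C ∧ ∀ v, R v ≤ C * ‖v‖ := by
  classical
  refine ⟨∑ i : Fin p, R (EuclideanSpace.single i (1:ℝ)),
    Finset.sum_nonneg fun i _ => Raux_nonneg ht hs _, fun v => ?_⟩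
  have hv : ∑ i : Fin p, v i • (EuclideanSpace.single i (1:ℝ)) = v := by
    simpa [EuclideanSpace.basisFun_apply, EuclideanSpace.basisFun_repr]
      using (EuclideanSpace.basisFun (Fin p) ℝ).sum_repr v
  calc R v = R (∑ i : Fin p, v i • (EuclideanSpace.single i (1:ℝ))) := by rw [hv]
    _ ≤ ∑ i : Fin p, R (v i • (EuclideanSpace.single i (1:ℝ))) :=
        Raux_sum ht hs _ _
    _ ≤ ∑ i : Fin p, ‖v‖ * R (EuclideanSpace.single i (1:ℝ)) := by
        refine Finset.sum_le_sum fun i _ => ?_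
        rw [hs]
        refine mul_le_mul_of_nonneg_right ?_ (Raux_nonneg ht hs _)
        have h1 : v i = ⟪EuclideanSpace.single i (1:ℝ), v⟫ := by
          simp [EuclideanSpace.inner_single_left]
        calc |v i| = |⟪EuclideanSpace.single i (1:ℝ), v⟫| := by rw [← h1]
          _ ≤ ‖EuclideanSpace.single i (1:ℝ)‖ * ‖v‖ := abs_real_inner_le_norm _ _
          _ = ‖v‖ := by simp [EuclideanSpace.norm_single]
    _ = (∑ i : Fin p, R (EuclideanSpace.single i (1:ℝ))) * ‖v‖ := by
        rw [Finset.sum_mul]; exact Finset.sum_congr rfl fun i _ => mul_comm _ _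

lemma Raux_continuous (ht : ∀ u v, R (u + v) ≤ R u + R v)
    (hs : ∀ (c : ℝ) (u), R (c • u) = |c| * R u) : Continuous R := by
  obtain ⟨C, hC0, hC⟩ := Raux_upper ht hs
  refine (LipschitzWith.of_dist_le_mul (K := C.toNNReal) (fun u v => ?_)).continuous
  rw [Real.dist_eq, dist_eq_norm, Real.coe_toNNReal _ hC0]
  have h1 : R u ≤ R v + C * ‖u - v‖ := by
    have := ht (u - v) v
    rw [sub_add_cancel] at this
    linarith [hC (u - v)]
  have h2 : R v ≤ R u + C * ‖u - v‖ := by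
    have h3 := ht (v - u) u
    rw [sub_add_cancel] at h3
    have h4 := hC (v - u)
    rw [norm_sub_rev] at h4
    linarith
  rw [abs_le]
  constructor <;> linarith

lemma Raux_lower (ht : ∀ u v, R (u + v) ≤ R u + R v)
    (hs : ∀ (c : ℝ) (u), R (c • u) = |c| * R u)
    (hd : ∀ u, R u = 0 ↔ u = 0) :
    ∃ c : ℝ, 0 < c ∧ ∀ v, c * ‖v‖ ≤ R v := by
  rcases subsingleton_or_nontrivial (EuclideanSpace ℝ (Fin p)) with h | h
  · exact ⟨1, one_pos, fun v => by
      rw [Subsingleton.elim v 0]; simp [Raux_zero hs]⟩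
  · have hsph : (Metric.sphere (0 : EuclideanSpace ℝ (Fin p)) 1).Nonempty :=
      NormedSpace.sphere_nonempty.2 zero_le_one
    obtain ⟨x0, hx0, hmin⟩ := (isCompact_sphere (0 : EuclideanSpace ℝ (Fin p)) 1).exists_isMinOn
      hsph (Raux_continuous ht hs).continuousOn
    have hx0n : ‖x0‖ = 1 := by simpa using hx0
    have hx0ne : x0 ≠ 0 := by intro hcon; rw [hcon] at hx0n; simp at hx0n
    have hpos : 0 < R x0 :=
      lt_of_le_of_ne (Raux_nonneg ht hs _) (fun hcon => hx0ne ((hd x0).1 hcon.symm))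
    refine ⟨R x0, hpos, fun v => ?_⟩
    by_cases hv : v = 0
    · simp [hv, Raux_zero hs]
    · have hnv : (0:ℝ) < ‖v‖ := norm_pos_iff.2 hv
      have hw : (‖v‖⁻¹ • v) ∈ Metric.sphere (0 : EuclideanSpace ℝ (Fin p)) 1 := by
        simp [norm_smul, abs_of_pos (inv_pos.2 hnv), inv_mul_cancel₀ hnv.ne']
      have h2 : R x0 ≤ R (‖v‖⁻¹ • v) := hmin hw
      rw [hs, abs_of_pos (inv_pos.2 hnv)] at h2
      calc R x0 * ‖v‖ ≤ (‖v‖⁻¹ * R v) * ‖v‖ := by nlinarith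
        _ = R v := by field_simp

lemma Raux_dual_pairing (ht : ∀ u v, R (u + v) ≤ R u + R v)
    (hs : ∀ (c : ℝ) (u), R (c • u) = |c| * R u)
    (hd : ∀ u, R u = 0 ↔ u = 0)
    (u v : EuclideanSpace ℝ (Fin p)) :
    ⟪u, v⟫ ≤ dualNorm R u * R v := by
  obtain ⟨c, hc, hcl⟩ := Raux_lower ht hs hd
  have hbdd : BddAbove ((fun v => ⟪u, v⟫) '' {v | R v ≤ 1}) := by
    refine ⟨‖u‖ / c, fun y hy => ?_⟩
    obtain ⟨w, hw, rfl⟩ := hy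
    have h1 : ⟪u, w⟫ ≤ ‖u‖ * ‖w‖ := real_inner_le_norm u w
    have h2 : c * ‖w‖ ≤ R w := hcl w
    have h3 : R w ≤ 1 := hw
    rw [div_eq_mul_inv]
    have h4 : ‖w‖ ≤ c⁻¹ := by
      rw [← one_mul c⁻¹]
      calc ‖w‖ = (c * ‖w‖) * c⁻¹ := by field_simp
        _ ≤ 1 * c⁻¹ := by
          exact mul_le_mul_of_nonneg_right (le_trans h2 h3) (inv_pos.2 hc).le
    calc ⟪u, w⟫ ≤ ‖u‖ * ‖w‖ := h1
      _ ≤ ‖u‖ * c⁻¹ := mul_le_mul_of_nonneg_left h4 (norm_nonneg u)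
  by_cases hv : v = 0
  · simp [hv, Raux_zero hs]
  · have hRv : 0 < R v :=
      lt_of_le_of_ne (Raux_nonneg ht hs _) (fun hcon => hv ((hd v).1 hcon.symm))
    have hw : R ((R v)⁻¹ • v) = 1 := by
      rw [hs, abs_of_pos (inv_pos.2 hRv), inv_mul_cancel₀ hRv.ne']
    have hmem : ⟪u, (R v)⁻¹ • v⟫ ∈ (fun v => ⟪u, v⟫) '' {v | R v ≤ 1} :=
      ⟨(R v)⁻¹ • v, le_of_eq hw, rfl⟩
    have h5 : ⟪u, (R v)⁻¹ • v⟫ ≤ dualNorm R u := le_csSup hbdd hmem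
    rw [real_inner_smul_right] at h5
    calc ⟪u, v⟫ = R v * ((R v)⁻¹ * ⟪u, v⟫) := by field_simp
      _ ≤ R v * dualNorm R u := mul_le_mul_of_nonneg_left h5 hRv.le
      _ = dualNorm R u * R v := mul_comm _ _

lemma convex_first_order {L : EuclideanSpace ℝ (Fin p) → ℝ}
    (hc : ConvexOn ℝ Set.univ L) (hdiff : Differentiable ℝ L)
    (x y : EuclideanSpace ℝ (Fin p)) :
    L x + ⟪gradient L x, y - x⟫ ≤ L y := by
  set ψ : ℝ → ℝ := fun t => L (x + t • (y - x)) with hψ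
  have hψc : ConvexOn ℝ Set.univ ψ := by
    have h := hc.comp_affineMap (AffineMap.lineMap x y)
    have heq : (L ∘ (AffineMap.lineMap x y : ℝ →ᵃ[ℝ] EuclideanSpace ℝ (Fin p))) = ψ := by
      funext t
      simp [hψ, AffineMap.lineMap_apply, Function.comp]
      congr 1
      abel
    rw [heq] at h
    simpa using h
  have h1 : HasFDerivAt L (InnerProductSpace.toDual ℝ _ (gradient L x)) x :=
    (hdiff x).hasGradientAt.hasFDerivAt
  have h2 : HasDerivAt (fun t : ℝ => x + t • (y - x)) (y - x) 0 := by
    simpa using ((hasDerivAt_id (0:ℝ)).smul_const (y - x)).const_add x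
  have hd : HasDerivAt ψ ⟪gradient L x, y - x⟫ 0 := by
    have h1' : HasFDerivAt L (InnerProductSpace.toDual ℝ _ (gradient L x))
        (x + (0:ℝ) • (y - x)) := by simpa using h1
    have h3 := h1'.comp_hasDerivAt (0:ℝ) h2
    simpa [InnerProductSpace.toDual_apply_apply, hψ, Function.comp_def] using h3
  have h4 := hψc.le_slope_of_hasDerivAt (Set.mem_univ (0:ℝ)) (Set.mem_univ (1:ℝ)) one_pos hd
  have h5 : slope ψ 0 1 = L y - L x := by
    simp [slope_def_field, hψ]
  rw [h5] at h4
  linarith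

lemma quad_solve {α lam φ Z RT t : ℝ} (hα : 0 < α) (hZ : 0 ≤ Z) (hlam : 0 < lam)
    (hφ0 : 0 ≤ φ) (hRT : 0 ≤ RT) (ht0 : 0 ≤ t)
    (h : α * t ^ 2 ≤ (3 * lam / 2) * (φ * t) + 2 * lam * RT + Z) :
    t ^ 2 ≤ 9 * (lam ^ 2 / α ^ 2) * φ ^ 2 + (1 / α) * (2 * Z + 4 * lam * RT) := by
  have hkey : α ^ 2 * t ^ 2 ≤ 9 * lam ^ 2 * φ ^ 2 + α * (2 * Z + 4 * lam * RT) := by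
    nlinarith [sq_nonneg (α * t - (3/2) * lam * φ), sq_nonneg (lam * φ),
      mul_le_mul_of_nonneg_left h hα.le]
  have heq : 9 * (lam ^ 2 / α ^ 2) * φ ^ 2 + (1 / α) * (2 * Z + 4 * lam * RT)
      = (9 * lam ^ 2 * φ ^ 2 + α * (2 * Z + 4 * lam * RT)) / α ^ 2 := by
    field_simp
  rw [heq, le_div_iff₀ (by positivity)]
  linarith

end aux


theorem oracle_inequality
    {p : ℕ} (M Mbar : Submodule ℝ (EuclideanSpace ℝ (Fin p))) (hMM : M ≤ Mbar)
    -- R is a norm: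
    (R : EuclideanSpace ℝ (Fin p) → ℝ)
    (hR_tri : ∀ u v, R (u + v) ≤ R u + R v)
    (hR_smul : ∀ (c : ℝ) (u), R (c • u) = |c| * R u)
    (hR_def : ∀ u, R u = 0 ↔ u = 0)
    -- R is decomposable w.r.t. (M, M̄⊥):
    (hR_dec : ∀ θ ∈ M, ∀ γ ∈ Mbarᗮ, R (θ + γ) = R θ + R γ)
    -- L is convex and differentiable:
    (L : EuclideanSpace ℝ (Fin p) → ℝ)
    (hL_conv : ConvexOn ℝ Set.univ L)
    (hL_diff : Differentiable ℝ L)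
    (lam : ℝ) (hlam : 0 < lam)
    (φ α Z : ℝ) (hα : 0 < α) (hZ : 0 ≤ Z)
    (θstar θhat : EuclideanSpace ℝ (Fin p))
    -- φ is the (finite) subspace compatibility constant of (‖·‖, R) on M̄:
    (hφ : IsLUB ((fun u => R u / ‖u‖) '' {u | u ∈ Mbar ∧ u ≠ 0}) φ)
    -- θ̂ minimizes the regularized loss:
    (hmin : ∀ θ : EuclideanSpace ℝ (Fin p), L θhat + lam * R θhat ≤ L θ + lam * R θ)
    -- (i) λ ≥ 2 R*(∇L(θ*)):
    (hA : 2 * dualNorm R (gradient L θstar) ≤ lam)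
    -- (ii) restricted strong convexity over the constraint set ℂ:
    (hE : ∀ θ : EuclideanSpace ℝ (Fin p),
      R (proj Mbarᗮ (θ - θstar)) ≤ 3 * R (proj Mbar (θ - θstar)) + 4 * R (proj Mᗮ θstar) →
      α * ‖θ - θstar‖ ^ 2 - Z ≤
        L θ - L θstar - ⟪gradient L θstar, θ - θstar⟫) :
    ‖θhat - θstar‖ ^ 2 ≤
      9 * (lam ^ 2 / α ^ 2) * φ ^ 2 + (1 / α) * (2 * Z + 4 * lam * R (proj Mᗮ θstar)) := by
  classical
  set Δ := θhat - θstar with hΔ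
  set g := gradient L θstar with hg
  set A := proj Mbar Δ with hAdef
  set B := proj Mbarᗮ Δ with hBdef
  set S := proj M θstar with hSdef
  set T := proj Mᗮ θstar with hTdef
  -- nonnegativity of R
  have hR0 : R 0 = 0 := Raux_zero hR_smul
  have hRneg : ∀ u, R (-u) = R u := Raux_neg hR_smul
  have hRpos : ∀ u, 0 ≤ R u := Raux_nonneg hR_tri hR_smul
  -- projection decompositions
  have hAB : A + B = Δ :=
    Submodule.starProjection_add_starProjection_orthogonal (K := Mbar) Δ
  have hST : S + T = θstar :=
    Submodule.starProjection_add_starProjection_orthogonal (K := M) θstar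
  have hAmem : A ∈ Mbar := (Submodule.orthogonalProjectionOnto Mbar Δ).2
  have hBmem : B ∈ Mbarᗮ := (Submodule.orthogonalProjectionOnto Mbarᗮ Δ).2
  have hSmem : S ∈ M := (Submodule.orthogonalProjectionOnto M θstar).2
  -- ‖A‖ ≤ ‖Δ‖
  have hAnorm : ‖A‖ ≤ ‖Δ‖ := by
    have h := Submodule.norm_sq_eq_add_norm_sq_projection Δ Mbar
    have h2 : ‖A‖ ^ 2 + ‖B‖ ^ 2 = ‖Δ‖ ^ 2 := by
      rw [h]; simp [hAdef, hBdef, proj]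
    nlinarith [norm_nonneg A, norm_nonneg B, norm_nonneg Δ]
  -- φ facts
  have hφne : ((fun u => R u / ‖u‖) '' {u | u ∈ Mbar ∧ u ≠ 0}).Nonempty := by
    by_contra hcon
    rw [Set.not_nonempty_iff_eq_empty] at hcon
    have h1 : φ - 1 ∈ upperBounds ((fun u => R u / ‖u‖) '' {u | u ∈ Mbar ∧ u ≠ 0}) := by
      rw [hcon]; intro x hx; exact absurd hx (Set.notMem_empty x)
    linarith [hφ.2 h1]
  have hφ0 : 0 ≤ φ := by
    obtain ⟨y, ⟨u, ⟨hu, hune⟩, rfl⟩⟩ := hφne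
    exact le_trans (div_nonneg (hRpos u) (norm_nonneg u)) (hφ.1 ⟨u, ⟨hu, hune⟩, rfl⟩)
  have hcompat : ∀ u ∈ Mbar, R u ≤ φ * ‖u‖ := by
    intro u hu
    by_cases h : u = 0
    · simp [h, hR0]
    · have h1 : R u / ‖u‖ ≤ φ := hφ.1 ⟨u, ⟨hu, h⟩, rfl⟩
      have h2 : (0:ℝ) < ‖u‖ := norm_pos_iff.2 h
      rw [div_le_iff₀ h2] at h1
      linarith
  -- dual pairing bounds
  have hdual : ∀ v, ⟪g, v⟫ ≤ (lam / 2) * R v := by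
    intro v
    have h1 := Raux_dual_pairing hR_tri hR_smul hR_def g v
    nlinarith [hRpos v]
  have hd1 : ⟪g, Δ⟫ ≤ (lam / 2) * R Δ := hdual Δ
  have hd2 : -⟪g, Δ⟫ ≤ (lam / 2) * R Δ := by
    have := hdual (-Δ)
    rwa [inner_neg_right, hRneg] at this
  -- convexity: first-order bound
  have hconv1 : L θstar + ⟪g, Δ⟫ ≤ L θhat := by
    have := convex_first_order hL_conv hL_diff θstar θhat
    rwa [← hΔ, ← hg] at this
  -- minimality
  have hmin1 : L θhat + lam * R θhat ≤ L θstar + lam * R θstar := hmin θstar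
  -- R Δ ≤ R A + R B
  have hRΔ : R Δ ≤ R A + R B := by rw [← hAB]; exact hR_tri A B
  -- decomposability bounds
  have hθhat_eq : θhat = (S + B) + (T + A) := by
    have : θhat = θstar + Δ := by rw [hΔ]; abel
    rw [this, ← hST, ← hAB]; abel
  have hdec1 : R (S + B) = R S + R B := hR_dec S hSmem B hBmem
  have hkey1 : R S + R B ≤ R θhat + (R T + R A) := by
    have h1 : R (S + B) ≤ R θhat + R (-(T + A)) := by
      have h2 := hR_tri θhat (-(T + A))
      have h3 : θhat + -(T + A) = S + B := by rw [hθhat_eq]; abel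
      rw [h3] at h2; exact h2
    rw [hdec1, hRneg] at h1
    linarith [hR_tri T A]
  have hkey2 : R θstar ≤ R S + R T := by
    rw [← hST]; exact hR_tri S T
  -- lam * (R θhat - R θstar) ≤ (lam/2) * R Δ
  have hstep1 : lam * R θhat - lam * R θstar ≤ (lam / 2) * R Δ := by
    have h1 : lam * R θhat - lam * R θstar ≤ L θstar - L θhat := by linarith
    linarith
  -- divide minimality bound by lam
  have hstep1' : R θhat - R θstar ≤ (1/2) * R Δ := by
    have h2 : lam * (R θhat - R θstar) ≤ lam * ((1/2) * R Δ) := by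
      ring_nf
      ring_nf at hstep1
      linarith
    exact le_of_mul_le_mul_left h2 hlam
  -- error in constraint set
  have hcone : R B ≤ 3 * R A + 4 * R T := by
    have h4 : (1/2 : ℝ) * R Δ ≤ (1/2) * (R A + R B) := by linarith
    linarith
  -- restricted strong convexity applies
  have hrsc : α * ‖Δ‖ ^ 2 - Z ≤ L θhat - L θstar - ⟪g, Δ⟫ := hE θhat hcone
  -- upper bound on Bregman divergence
  have hbreg : L θhat - L θstar - ⟪g, Δ⟫ ≤ (3 * lam / 2) * R A + 2 * lam * R T := by
    have h1 : L θhat - L θstar ≤ lam * R θstar - lam * R θhat := by linarith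
    have h3 : R θstar - R θhat ≤ R A + 2 * R T - R B := by linarith
    have h2 : lam * R θstar - lam * R θhat ≤ lam * (R A + 2 * R T - R B) := by
      linarith [mul_le_mul_of_nonneg_left h3 hlam.le]
    have h4 : -⟪g, Δ⟫ ≤ (lam/2) * (R A + R B) := by
      linarith [mul_le_mul_of_nonneg_left hRΔ (by linarith : (0:ℝ) ≤ lam/2)]
    linarith [mul_nonneg hlam.le (hRpos B)]
  -- combine with compatibility
  have hRA : R A ≤ φ * ‖Δ‖ := by
    calc R A ≤ φ * ‖A‖ := hcompat A hAmem
      _ ≤ φ * ‖Δ‖ := mul_le_mul_of_nonneg_left hAnorm hφ0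
  have hfinal : α * ‖Δ‖ ^ 2 ≤ (3 * lam / 2) * (φ * ‖Δ‖) + 2 * lam * R T + Z := by
    have h1 : (3 * lam / 2) * R A ≤ (3 * lam / 2) * (φ * ‖Δ‖) :=
      mul_le_mul_of_nonneg_left hRA (by linarith)
    linarith
  exact quad_solve hα hZ hlam hφ0 (hRpos T) (norm_nonneg Δ) hfinal
end
end

section
/- Let x_1,…,x_{T0} be i.i.d. random vectors in ℝ^d with ‖x_t‖₂ ≤ 1 almost surely and population Gram matrix Σ = E[x₁x₁ᵀ]. Let S ⊆ {1,…,d} with |S| = s ≥ 1 and α0 > 0, and assume the restricted eigenvalue condition βᵀΣβ ≥ α0‖β‖₂² for all β ∈ ℂ_S. Let C(s) = (√(α0/(64s) + 1) − 1)². Then for every T0 ≥ 2·log(d² + d)/C(s), with probability at least 1 − exp(−T0·C(s)/4), it holds simultaneously for all β ∈ ℂ_S that (1/(2T0))·Σ_{t=1}^{T0} ⟨x_t, β⟩² ≥ (α0/4)·‖β‖₂². -/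
/- STATEMENT 5 (restricted strong convexity for the LASSO bandit, Lemma B.3 of
the paper).  For i.i.d. contexts with ‖x‖₂ ≤ 1 a.s. whose population Gram matrix
satisfies the restricted eigenvalue condition over the cone ℂ_S, after
T0 ≥ 2 log(d²+d)/C(s) exploration rounds, with probability at least
1 − exp(−T0 C(s)/4), the empirical quadratic form satisfies
(1/(2T0)) Σ_t ⟨x_t, β⟩² ≥ (α0/4)‖β‖₂² simultaneously for all β ∈ ℂ_S. -/

noncomputable section
open MeasureTheory ProbabilityTheory

set_option maxHeartbeats 1000000
noncomputable section
open MeasureTheory ProbabilityTheory Real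

section Helpers
variable {Ω : Type*} [MeasurableSpace Ω] {μ : Measure Ω}

lemma lasso_coord_le_norm {d : ℕ} (y : EuclideanSpace ℝ (Fin d)) (i : Fin d) : |y i| ≤ ‖y‖ := by
  rw [EuclideanSpace.norm_eq]
  have h1 : ‖y i‖ ^ 2 ≤ ∑ j, ‖y j‖ ^ 2 :=
    Finset.single_le_sum (f := fun j => ‖y j‖ ^ 2) (fun j _ => sq_nonneg _) (Finset.mem_univ i)
  have := Real.sqrt_le_sqrt h1
  rwa [Real.sqrt_sq (norm_nonneg _), Real.norm_eq_abs] at this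

lemma lasso_norm_sq_eq {d : ℕ} (β : EuclideanSpace ℝ (Fin d)) : ‖β‖^2 = ∑ i, β i ^ 2 := by
  rw [EuclideanSpace.norm_eq, Real.sq_sqrt (by positivity)]
  simp [Real.norm_eq_abs, sq_abs]

lemma lasso_integrable_of_bound [IsFiniteMeasure μ] {f : Ω → ℝ} (hm : Measurable f)
    {c : ℝ} (hb : ∀ᵐ ω ∂μ, |f ω| ≤ c) : Integrable f μ :=
  ⟨hm.aestronglyMeasurable, HasFiniteIntegral.of_bounded (C := c)
    (by simpa [Real.norm_eq_abs] using hb)⟩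

lemma lasso_mgf_le_of_bound [IsProbabilityMeasure μ] {Y : Ω → ℝ} (hm : Measurable Y)
    (hb : ∀ᵐ ω ∂μ, |Y ω| ≤ 2) (hmean : ∫ ω, Y ω ∂μ = 0) (t : ℝ) :
    mgf Y μ t ≤ Real.exp (2 * t ^ 2) := by
  have hYint : Integrable Y μ := lasso_integrable_of_bound hm hb
  set c1 := Real.exp (-(2*t)) / 4 with hc1
  set c2 := Real.exp (2*t) / 4 with hc2
  have hpt : ∀ᵐ ω ∂μ, Real.exp (t * Y ω) ≤ (2 - Y ω) * c1 + (2 + Y ω) * c2 := by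
    filter_upwards [hb] with ω hω
    obtain ⟨hl, hr⟩ := abs_le.1 hω
    have h1 : (0:ℝ) ≤ (2 - Y ω)/4 := by linarith
    have h2 : (0:ℝ) ≤ (2 + Y ω)/4 := by linarith
    have hsum : (2 - Y ω)/4 + (2 + Y ω)/4 = 1 := by ring
    have hcx := convexOn_exp.2 (Set.mem_univ (-(2*t))) (Set.mem_univ (2*t)) h1 h2 hsum
    simp only [smul_eq_mul] at hcx
    have harg : (2 - Y ω)/4 * (-(2*t)) + (2 + Y ω)/4 * (2*t) = t * Y ω := by ring
    rw [harg] at hcx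
    calc Real.exp (t * Y ω) ≤ (2 - Y ω)/4 * Real.exp (-(2*t)) + (2 + Y ω)/4 * Real.exp (2*t) := hcx
      _ = (2 - Y ω) * c1 + (2 + Y ω) * c2 := by rw [hc1, hc2]; ring
  have hint1 : Integrable (fun ω => Real.exp (t * Y ω)) μ := by
    refine lasso_integrable_of_bound ((hm.const_mul t).exp) (c := Real.exp (2 * |t|)) ?_
    filter_upwards [hb] with ω hω
    rw [abs_of_nonneg (Real.exp_pos _).le]
    apply Real.exp_le_exp.2
    calc t * Y ω ≤ |t * Y ω| := le_abs_self _
      _ = |t| * |Y ω| := abs_mul _ _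
      _ ≤ |t| * 2 := by nlinarith [abs_nonneg t]
      _ = 2 * |t| := by ring
  have hint2 : Integrable (fun ω => (2 - Y ω) * c1 + (2 + Y ω) * c2) μ := by
    exact (((integrable_const (2:ℝ)).sub hYint).mul_const c1).add
      (((integrable_const (2:ℝ)).add hYint).mul_const c2)
  have hle : mgf Y μ t ≤ ∫ ω, ((2 - Y ω) * c1 + (2 + Y ω) * c2) ∂μ :=
    integral_mono_ae hint1 hint2 hpt
  have hval : ∫ ω, ((2 - Y ω) * c1 + (2 + Y ω) * c2) ∂μ = Real.cosh (2*t) := by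
    have e1 : Integrable (fun ω => (2 - Y ω) * c1) μ := by
      exact ((integrable_const (2:ℝ)).sub hYint).mul_const c1
    have e2 : Integrable (fun ω => (2 + Y ω) * c2) μ := by
      exact ((integrable_const (2:ℝ)).add hYint).mul_const c2
    rw [integral_add e1 e2, integral_mul_const, integral_mul_const,
      integral_sub (integrable_const _) hYint, integral_add (integrable_const _) hYint,
      hmean, integral_const]
    simp only [measure_univ, probReal_univ, ENNReal.toReal_one, smul_eq_mul, one_mul, sub_zero, add_zero]
    rw [hc1, hc2, Real.cosh_eq]
    ring
  have hcosh : Real.cosh (2*t) ≤ Real.exp ((2*t)^2 / 2) := Real.cosh_le_exp_half_sq _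
  have h22 : (2*t)^2/2 = 2 * t^2 := by ring
  rw [hval] at hle
  exact hle.trans (by rw [← h22]; exact hcosh)

lemma lasso_chernoff_sum [IsProbabilityMeasure μ] {T0 : ℕ} {f : Fin T0 → Ω → ℝ}
    (hm : ∀ t, Measurable (f t))
    (hi : iIndepFun f μ)
    (hb : ∀ t, ∀ᵐ ω ∂μ, |f t ω| ≤ 2)
    (hmean : ∀ t, ∫ ω, f t ω ∂μ = 0)
    {ε : ℝ} (hε : 0 < ε) :
    (μ {ω | (T0:ℝ) * ε ≤ ∑ t, f t ω}).toReal ≤ Real.exp (-((T0:ℝ) * ε^2 / 8)) := by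
  set r := ε/4 with hrdef
  have hr : 0 ≤ r := by positivity
  have hXm : Measurable (∑ t, f t) := by
    rw [show (∑ t, f t) = (fun a => ∑ t, f t a) by funext a; simp [Finset.sum_apply]]
    exact Finset.measurable_sum _ fun t _ => hm t
  have hXbd : ∀ᵐ ω ∂μ, |(∑ t, f t) ω| ≤ 2 * T0 := by
    have hall : ∀ᵐ ω ∂μ, ∀ t, |f t ω| ≤ 2 := (ae_all_iff).2 hb
    filter_upwards [hall] with ω hω
    simp only [Finset.sum_apply]
    calc |∑ t, f t ω| ≤ ∑ t, |f t ω| := Finset.abs_sum_le_sum_abs _ _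
      _ ≤ ∑ _t : Fin T0, (2:ℝ) := Finset.sum_le_sum (fun t _ => hω t)
      _ = 2 * T0 := by simp [mul_comm]
  have hint : Integrable (fun ω => Real.exp (r * (∑ t, f t) ω)) μ := by
    refine lasso_integrable_of_bound ((hXm.const_mul r).exp) (c := Real.exp (r * (2 * T0))) ?_
    filter_upwards [hXbd] with ω hω
    rw [abs_of_nonneg (Real.exp_pos _).le]
    exact Real.exp_le_exp.2 (by
      calc r * (∑ t, f t) ω ≤ r * |(∑ t, f t) ω| :=
            mul_le_mul_of_nonneg_left (le_abs_self _) hr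
        _ ≤ r * (2 * T0) := mul_le_mul_of_nonneg_left hω hr)
  have hset : {ω | (T0:ℝ)*ε ≤ ∑ t, f t ω} = {ω | (T0:ℝ)*ε ≤ (∑ t, f t) ω} := by
    ext ω; simp [Finset.sum_apply]
  have hch := measure_ge_le_exp_mul_mgf (μ := μ) (X := ∑ t, f t) ((T0:ℝ)*ε) hr hint
  rw [hset]
  refine hch.trans ?_
  have hmgf : mgf (∑ t, f t) μ r ≤ Real.exp (2 * r^2) ^ (T0:ℕ) := by
    rw [hi.mgf_sum hm Finset.univ]
    calc ∏ t : Fin T0, mgf (f t) μ r ≤ ∏ _t : Fin T0, Real.exp (2 * r^2) :=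
          Finset.prod_le_prod (fun t _ => mgf_nonneg)
            (fun t _ => lasso_mgf_le_of_bound (hm t) (hb t) (hmean t) r)
      _ = Real.exp (2 * r^2) ^ (T0:ℕ) := by simp
  calc Real.exp (-r * ((T0:ℝ)*ε)) * mgf (∑ t, f t) μ r
      ≤ Real.exp (-r * ((T0:ℝ)*ε)) * Real.exp (2 * r^2) ^ (T0:ℕ) :=
        mul_le_mul_of_nonneg_left hmgf (Real.exp_pos _).le
    _ = Real.exp (-((T0:ℝ) * ε^2 / 8)) := by
        rw [← Real.exp_nat_mul, ← Real.exp_add]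
        congr 1
        rw [hrdef]; ring

end Helpers


theorem lasso_rsc_condition
    {d : ℕ} (hd : 0 < d)
    {Ω : Type*} [MeasurableSpace Ω] (μ : Measure Ω) [IsProbabilityMeasure μ]
    (T0 : ℕ) (hT0 : 0 < T0)
    (x : Fin T0 → Ω → EuclideanSpace ℝ (Fin d))
    (hx_meas : ∀ t, Measurable (x t))
    -- i.i.d. contexts:
    (hx_indep : iIndepFun x μ)
    (hx_ident : ∀ s t, IdentDistrib (x s) (x t) μ μ)
    (hx_bound : ∀ t, ∀ᵐ ω ∂μ, ‖x t ω‖ ≤ 1)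
    -- the support S, |S| = s ≥ 1:
    (S : Finset (Fin d)) (s : ℕ) (hs : 1 ≤ s) (hcard : S.card = s)
    -- population Gram matrix:
    (Sig : Matrix (Fin d) (Fin d) ℝ)
    (hSig : ∀ i j, Sig i j = ∫ ω, x ⟨0, hT0⟩ ω i * x ⟨0, hT0⟩ ω j ∂μ)
    -- restricted eigenvalue condition on the cone ℂ_S:
    (α0 : ℝ) (hα0 : 0 < α0)
    (hRE : ∀ β : EuclideanSpace ℝ (Fin d),
      (∑ j ∈ Sᶜ, |β j|) ≤ 3 * ∑ j ∈ S, |β j| →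
      α0 * ‖β‖ ^ 2 ≤ ∑ i, ∑ j, β i * Sig i j * β j)
    -- T0 large enough:
    (hT0_big : 2 * Real.log ((d : ℝ) ^ 2 + d) /
      ((Real.sqrt (α0 / (64 * s) + 1) - 1) ^ 2) ≤ (T0 : ℝ)) :
    1 - Real.exp (-((T0 : ℝ) * (Real.sqrt (α0 / (64 * s) + 1) - 1) ^ 2) / 4) ≤
      (μ {ω | ∀ β : EuclideanSpace ℝ (Fin d),
        (∑ j ∈ Sᶜ, |β j|) ≤ 3 * ∑ j ∈ S, |β j| →
        (α0 / 4) * ‖β‖ ^ 2 ≤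
          (1 / (2 * (T0 : ℝ))) * ∑ t, (∑ j, x t ω j * β j) ^ 2}).toReal := by
  have hsR : (1:ℝ) ≤ (s:ℝ) := by exact_mod_cast hs
  have hsR0 : (0:ℝ) < (s:ℝ) := by linarith
  have hdR : (1:ℝ) ≤ (d:ℝ) := by exact_mod_cast hd
  have hT0R : (0:ℝ) < (T0:ℝ) := by exact_mod_cast hT0
  set ε : ℝ := α0 / (32 * s) with hεdef
  have hε : 0 < ε := by positivity
  set C : ℝ := (Real.sqrt (α0 / (64 * s) + 1) - 1) ^ 2 with hCdef
  -- bounds on C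
  have hsqrt_gt : 1 < Real.sqrt (α0 / (64 * s) + 1) := by
    refine (Real.lt_sqrt (by norm_num)).2 ?_
    have : 0 < α0 / (64*(s:ℝ)) := by positivity
    nlinarith
  have hC_pos : 0 < C := by rw [hCdef]; apply pow_pos; linarith
  have hC_le : C ≤ ε^2/16 := by
    have hu : α0 / (64 * (s:ℝ)) = ε / 2 := by rw [hεdef]; ring
    have hsle : Real.sqrt (α0 / (64 * s) + 1) ≤ 1 + ε/4 := by
      have h1 : α0 / (64 * (s:ℝ)) + 1 ≤ (1 + ε/4)^2 := by rw [hu]; nlinarith [hε.le]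
      calc Real.sqrt (α0 / (64 * s) + 1) ≤ Real.sqrt ((1 + ε/4)^2) := Real.sqrt_le_sqrt h1
        _ = 1 + ε/4 := Real.sqrt_sq (by linarith [hε.le])
    have h0 : 0 ≤ Real.sqrt (α0 / (64 * s) + 1) - 1 := by linarith
    have h5 : Real.sqrt (α0 / (64 * s) + 1) - 1 ≤ ε/4 := by linarith
    have h6 : (Real.sqrt (α0 / (64 * s) + 1) - 1)^2 ≤ (ε/4)^2 := pow_le_pow_left₀ h0 h5 2
    rw [hCdef]
    calc (Real.sqrt (α0 / (64 * s) + 1) - 1)^2 ≤ (ε/4)^2 := h6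
      _ = ε^2/16 := by ring
  -- coordinate facts
  have hcm : ∀ (t : Fin T0) (i : Fin d), Measurable (fun ω => x t ω i) :=
    fun t i => (measurable_pi_apply i).comp (Measurable.comp (WithLp.measurable_ofLp _ _) (hx_meas t))
  have hcb : ∀ t : Fin T0, ∀ᵐ ω ∂μ, ∀ i, |x t ω i| ≤ 1 := by
    intro t; filter_upwards [hx_bound t] with ω h i
    exact (lasso_coord_le_norm _ i).trans h
  have hprod_meas : ∀ (t : Fin T0) (i j : Fin d), Measurable (fun ω => x t ω i * x t ω j) :=
    fun t i j => (hcm t i).mul (hcm t j)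
  have hprod_bd : ∀ (t : Fin T0) (i j : Fin d), ∀ᵐ ω ∂μ, |x t ω i * x t ω j| ≤ 1 := by
    intro t i j; filter_upwards [hcb t] with ω h
    rw [abs_mul]
    exact mul_le_one₀ (h i) (abs_nonneg _) (h j)
  have hprod_int : ∀ (t : Fin T0) (i j : Fin d), Integrable (fun ω => x t ω i * x t ω j) μ :=
    fun t i j => lasso_integrable_of_bound (hprod_meas t i j) (hprod_bd t i j)
  have hmean_prod : ∀ (t : Fin T0) (i j : Fin d), ∫ ω, x t ω i * x t ω j ∂μ = Sig i j := by
    intro t i j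
    rw [hSig i j]
    exact ((hx_ident t ⟨0, hT0⟩).comp
      (by fun_prop : Measurable fun v : EuclideanSpace ℝ (Fin d) => v i * v j)).integral_eq
  have hSigb : ∀ i j, |Sig i j| ≤ 1 := by
    intro i j
    rw [hSig i j]
    calc |∫ ω, x ⟨0,hT0⟩ ω i * x ⟨0,hT0⟩ ω j ∂μ|
        ≤ ∫ ω, |x ⟨0,hT0⟩ ω i * x ⟨0,hT0⟩ ω j| ∂μ := by
          have hn := norm_integral_le_integral_norm (μ := μ)
            (fun ω => x ⟨0,hT0⟩ ω i * x ⟨0,hT0⟩ ω j)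
          simp only [Real.norm_eq_abs] at hn
          exact hn
      _ ≤ ∫ _ω, (1:ℝ) ∂μ :=
          integral_mono_ae ((hprod_int _ i j).abs) (integrable_const 1) (hprod_bd _ i j)
      _ = 1 := by simp
  -- entry deviation processes
  set g : Fin d → Fin d → Fin T0 → Ω → ℝ := fun i j t ω => x t ω i * x t ω j - Sig i j with hgdef
  set g' : Fin d → Fin d → Fin T0 → Ω → ℝ := fun i j t ω => Sig i j - x t ω i * x t ω j with hg'def
  have hg_meas : ∀ i j t, Measurable (g i j t) := fun i j t => (hprod_meas t i j).sub measurable_const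
  have hg'_meas : ∀ i j t, Measurable (g' i j t) := fun i j t => measurable_const.sub (hprod_meas t i j)
  have hg_bd : ∀ i j t, ∀ᵐ ω ∂μ, |g i j t ω| ≤ 2 := by
    intro i j t; filter_upwards [hprod_bd t i j] with ω h
    have h2 := hSigb i j
    have : |x t ω i * x t ω j - Sig i j| ≤ |x t ω i * x t ω j| + |Sig i j| := abs_sub _ _
    simp only [hgdef]
    linarith
  have hg'_bd : ∀ i j t, ∀ᵐ ω ∂μ, |g' i j t ω| ≤ 2 := by
    intro i j t; filter_upwards [hg_bd i j t] with ω h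
    have : g' i j t ω = -(g i j t ω) := by simp [hgdef, hg'def]
    rw [this, abs_neg]; exact h
  have hg_mean : ∀ i j t, ∫ ω, g i j t ω ∂μ = 0 := by
    intro i j t
    simp only [hgdef]
    rw [integral_sub (hprod_int t i j) (integrable_const _), hmean_prod t i j, integral_const]
    simp
  have hg'_mean : ∀ i j t, ∫ ω, g' i j t ω ∂μ = 0 := by
    intro i j t
    simp only [hg'def]
    rw [integral_sub (integrable_const _) (hprod_int t i j), hmean_prod t i j, integral_const]
    simp
  have hg_indep : ∀ i j, iIndepFun (g i j) μ := fun i j =>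
    hx_indep.comp (fun _ => fun v : EuclideanSpace ℝ (Fin d) => v i * v j - Sig i j)
      (fun _ => by fun_prop)
  have hg'_indep : ∀ i j, iIndepFun (g' i j) μ := fun i j =>
    hx_indep.comp (fun _ => fun v : EuclideanSpace ℝ (Fin d) => Sig i j - v i * v j)
      (fun _ => by fun_prop)
  -- bad sets and their probabilities
  set A : Fin d → Fin d → Set Ω := fun i j => {ω | (T0:ℝ)*ε ≤ ∑ t, g i j t ω} with hA
  set B : Fin d → Fin d → Set Ω := fun i j => {ω | (T0:ℝ)*ε ≤ ∑ t, g' i j t ω} with hB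
  have hA_bd : ∀ i j, (μ (A i j)).toReal ≤ Real.exp (-((T0:ℝ) * ε^2/8)) := fun i j =>
    lasso_chernoff_sum (hg_meas i j) (hg_indep i j) (hg_bd i j) (hg_mean i j) hε
  have hB_bd : ∀ i j, (μ (B i j)).toReal ≤ Real.exp (-((T0:ℝ) * ε^2/8)) := fun i j =>
    lasso_chernoff_sum (hg'_meas i j) (hg'_indep i j) (hg'_bd i j) (hg'_mean i j) hε
  -- good set
  set G : Set Ω := ⋂ i : Fin d, ⋂ j : Fin d,
    {ω | |(∑ t, x t ω i * x t ω j) - (T0:ℝ) * Sig i j| ≤ (T0:ℝ)*ε} with hGdef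
  have hGmeas : MeasurableSet G := by
    refine MeasurableSet.iInter fun i => MeasurableSet.iInter fun j => ?_
    have hFm : Measurable (fun ω => |(∑ t, x t ω i * x t ω j) - (T0:ℝ) * Sig i j|) :=
      ((Finset.measurable_sum _ (fun t _ => hprod_meas t i j)).sub measurable_const).abs
    exact measurableSet_le hFm measurable_const
  have hgsum : ∀ i j ω, ∑ t, g i j t ω = (∑ t, x t ω i * x t ω j) - (T0:ℝ) * Sig i j := by
    intro i j ω
    simp only [hgdef]
    rw [Finset.sum_sub_distrib, Finset.sum_const, Finset.card_univ, Fintype.card_fin,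
      nsmul_eq_mul]
  have hg'sum : ∀ i j ω, ∑ t, g' i j t ω = (T0:ℝ) * Sig i j - ∑ t, x t ω i * x t ω j := by
    intro i j ω
    simp only [hg'def]
    rw [Finset.sum_sub_distrib, Finset.sum_const, Finset.card_univ, Fintype.card_fin,
      nsmul_eq_mul]
  have hGc : Gᶜ ⊆ ⋃ p : Fin d × Fin d, (A p.1 p.2 ∪ B p.1 p.2) := by
    intro ω hω
    simp only [hGdef, Set.mem_compl_iff, Set.mem_iInter, Set.mem_setOf_eq, not_forall,
      not_le] at hω
    obtain ⟨i, j, hij⟩ := hω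
    refine Set.mem_iUnion.2 ⟨(i, j), ?_⟩
    rcases lt_abs.1 hij with h | h
    · left
      show (T0:ℝ)*ε ≤ ∑ t, g i j t ω
      rw [hgsum]; linarith
    · right
      show (T0:ℝ)*ε ≤ ∑ t, g' i j t ω
      rw [hg'sum]; linarith
  -- union bound
  have hGc_small : (μ Gᶜ).toReal ≤ (d:ℝ)^2 * (2 * Real.exp (-((T0:ℝ)*ε^2/8))) := by
    have hle : μ Gᶜ ≤ ∑ p : Fin d × Fin d, μ (A p.1 p.2 ∪ B p.1 p.2) := by
      refine (measure_mono hGc).trans ?_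
      simpa [tsum_fintype] using measure_iUnion_le (μ := μ)
        (fun p : Fin d × Fin d => A p.1 p.2 ∪ B p.1 p.2)
    have hfin : (∑ p : Fin d × Fin d, μ (A p.1 p.2 ∪ B p.1 p.2)) ≠ ⊤ :=
      (ENNReal.sum_lt_top.2 fun p _ => measure_lt_top _ _).ne
    calc (μ Gᶜ).toReal ≤ (∑ p : Fin d × Fin d, μ (A p.1 p.2 ∪ B p.1 p.2)).toReal :=
          ENNReal.toReal_mono hfin hle
      _ = ∑ p : Fin d × Fin d, (μ (A p.1 p.2 ∪ B p.1 p.2)).toReal :=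
          ENNReal.toReal_sum fun p _ => measure_ne_top _ _
      _ ≤ ∑ p : Fin d × Fin d, (2 * Real.exp (-((T0:ℝ)*ε^2/8))) := by
          refine Finset.sum_le_sum fun p _ => ?_
          have h1 : (μ (A p.1 p.2 ∪ B p.1 p.2)).toReal
              ≤ (μ (A p.1 p.2)).toReal + (μ (B p.1 p.2)).toReal := by
            rw [← ENNReal.toReal_add (measure_ne_top _ _) (measure_ne_top _ _)]
            exact ENNReal.toReal_mono
              (ENNReal.add_ne_top.2 ⟨measure_ne_top _ _, measure_ne_top _ _⟩)
              (measure_union_le _ _)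
          have := hA_bd p.1 p.2
          have := hB_bd p.1 p.2
          linarith
      _ = (d:ℝ)^2 * (2 * Real.exp (-((T0:ℝ)*ε^2/8))) := by
          rw [Finset.sum_const, Finset.card_univ]
          simp [Fintype.card_prod, nsmul_eq_mul]
          ring
  -- numeric comparison
  have hfinal : (d:ℝ)^2 * (2 * Real.exp (-((T0:ℝ)*ε^2/8)))
      ≤ Real.exp (-((T0:ℝ) * C) / 4) := by
    have hE2 : Real.exp (-((T0:ℝ)*ε^2/8)) ≤ Real.exp (-(2*((T0:ℝ)*C))) := by
      apply Real.exp_le_exp.2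
      nlinarith [hT0R.le, hC_le, hC_pos.le]
    have hlog : Real.log ((d:ℝ)^2 + d) ≤ (T0:ℝ)*C/2 := by
      rw [div_le_iff₀ hC_pos] at hT0_big
      linarith
    have hdpos : (0:ℝ) < (d:ℝ)^2 + d := by nlinarith
    have hdC : ((d:ℝ)^2 + d) ≤ Real.exp ((T0:ℝ)*C/2) := by
      calc ((d:ℝ)^2 + d) = Real.exp (Real.log ((d:ℝ)^2+d)) := (Real.exp_log hdpos).symm
        _ ≤ _ := Real.exp_le_exp.2 hlog
    have h2d : 2*(d:ℝ)^2 ≤ ((d:ℝ)^2 + d)^2 := by nlinarith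
    calc (d:ℝ)^2 * (2 * Real.exp (-((T0:ℝ)*ε^2/8)))
        = (2*(d:ℝ)^2) * Real.exp (-((T0:ℝ)*ε^2/8)) := by ring
      _ ≤ (((d:ℝ)^2 + d)^2) * Real.exp (-(2*((T0:ℝ)*C))) := by
          apply mul_le_mul h2d hE2 (Real.exp_pos _).le (by nlinarith)
      _ ≤ (Real.exp ((T0:ℝ)*C/2))^2 * Real.exp (-(2*((T0:ℝ)*C))) := by
          apply mul_le_mul_of_nonneg_right _ (Real.exp_pos _).le
          exact pow_le_pow_left₀ (by nlinarith) hdC 2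
      _ = Real.exp ((T0:ℝ)*C - 2*((T0:ℝ)*C)) := by
          rw [← Real.exp_nat_mul, ← Real.exp_add]
          congr 1; push_cast; ring
      _ ≤ Real.exp (-((T0:ℝ) * C) / 4) := by
          apply Real.exp_le_exp.2
          nlinarith [mul_nonneg hT0R.le hC_pos.le]
  -- deterministic inclusion
  have hsub : G ⊆ {ω | ∀ β : EuclideanSpace ℝ (Fin d),
      (∑ j ∈ Sᶜ, |β j|) ≤ 3 * ∑ j ∈ S, |β j| →
      (α0 / 4) * ‖β‖ ^ 2 ≤ (1 / (2 * (T0 : ℝ))) * ∑ t, (∑ j, x t ω j * β j) ^ 2} := by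
    intro ω hω
    have hdev : ∀ i j, |(∑ t, x t ω i * x t ω j) - (T0:ℝ)*Sig i j| ≤ (T0:ℝ)*ε := by
      intro i j
      have h1 := Set.mem_iInter.1 hω i
      have h2 := Set.mem_iInter.1 h1 j
      exact h2
    intro β hβ
    have hb2 : ‖β‖^2 = ∑ i, β i^2 := lasso_norm_sq_eq β
    -- ℓ1-ℓ2 comparison on the cone
    have l1 : ∑ i, |β i| ≤ 4 * ∑ j ∈ S, |β j| := by
      rw [← Finset.sum_add_sum_compl S (fun i => |β i|)]
      linarith
    have l2 : (∑ j ∈ S, |β j|)^2 ≤ (s:ℝ) * ∑ j ∈ S, β j ^2 := by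
      have h := sq_sum_le_card_mul_sum_sq (s := S) (f := fun j => |β j|)
      rw [hcard] at h
      simpa [sq_abs] using h
    have l3 : (∑ i, |β i|)^2 ≤ 16 * (s:ℝ) * ∑ i, β i^2 := by
      have hSnn : (0:ℝ) ≤ ∑ j ∈ S, |β j| := Finset.sum_nonneg fun j _ => abs_nonneg _
      have h4 : (∑ i, |β i|)^2 ≤ (4 * ∑ j ∈ S, |β j|)^2 :=
        pow_le_pow_left₀ (Finset.sum_nonneg fun i _ => abs_nonneg _) l1 2
      have hsub2 : ∑ j ∈ S, β j^2 ≤ ∑ i, β i^2 :=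
        Finset.sum_le_sum_of_subset_of_nonneg (Finset.subset_univ S) (fun i _ _ => sq_nonneg _)
      nlinarith
    -- expansion of the empirical quadratic form
    have expand : ∑ t, (∑ j, x t ω j * β j)^2
        = ∑ i, ∑ j, β i * β j * (∑ t, x t ω i * x t ω j) := by
      calc ∑ t, (∑ j, x t ω j * β j)^2
          = ∑ t, ∑ i, ∑ j, (x t ω i * β i) * (x t ω j * β j) := by
            refine Finset.sum_congr rfl fun t _ => ?_
            rw [sq, Finset.sum_mul_sum]
        _ = ∑ i, ∑ t, ∑ j, (x t ω i * β i) * (x t ω j * β j) := Finset.sum_comm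
        _ = ∑ i, ∑ j, ∑ t, (x t ω i * β i) * (x t ω j * β j) :=
            Finset.sum_congr rfl fun i _ => Finset.sum_comm
        _ = ∑ i, ∑ j, β i * β j * (∑ t, x t ω i * x t ω j) := by
            refine Finset.sum_congr rfl fun i _ => Finset.sum_congr rfl fun j _ => ?_
            rw [Finset.mul_sum]
            exact Finset.sum_congr rfl fun t _ => by ring
    have hdev_sum : |∑ i, ∑ j, β i * β j * ((∑ t, x t ω i * x t ω j) - (T0:ℝ)*Sig i j)|
        ≤ (T0:ℝ)*ε * (∑ i, |β i|)^2 := by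
      calc |∑ i, ∑ j, β i * β j * ((∑ t, x t ω i * x t ω j) - (T0:ℝ)*Sig i j)|
          ≤ ∑ i, |∑ j, β i * β j * ((∑ t, x t ω i * x t ω j) - (T0:ℝ)*Sig i j)| :=
            Finset.abs_sum_le_sum_abs _ _
        _ ≤ ∑ i, ∑ j, |β i * β j * ((∑ t, x t ω i * x t ω j) - (T0:ℝ)*Sig i j)| :=
            Finset.sum_le_sum fun i _ => Finset.abs_sum_le_sum_abs _ _
        _ ≤ ∑ i, ∑ j, |β i| * |β j| * ((T0:ℝ)*ε) := by
            refine Finset.sum_le_sum fun i _ => Finset.sum_le_sum fun j _ => ?_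
            rw [abs_mul, abs_mul]
            exact mul_le_mul_of_nonneg_left (hdev i j) (by positivity)
        _ = (T0:ℝ)*ε * ∑ i, ∑ j, |β i| * |β j| := by
            rw [Finset.mul_sum]
            refine Finset.sum_congr rfl fun i _ => ?_
            rw [Finset.mul_sum]
            exact Finset.sum_congr rfl fun j _ => by ring
        _ = (T0:ℝ)*ε * (∑ i, |β i|)^2 := by
            rw [sq, Finset.sum_mul_sum]
    have hsplit : ∑ i, ∑ j, β i * β j * (∑ t, x t ω i * x t ω j)
        = (T0:ℝ) * (∑ i, ∑ j, β i * Sig i j * β j)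
          + ∑ i, ∑ j, β i * β j * ((∑ t, x t ω i * x t ω j) - (T0:ℝ)*Sig i j) := by
      rw [Finset.mul_sum, ← Finset.sum_add_distrib]
      refine Finset.sum_congr rfl fun i _ => ?_
      rw [Finset.mul_sum, ← Finset.sum_add_distrib]
      exact Finset.sum_congr rfl fun j _ => by ring
    have hRE' := hRE β hβ
    have hQ : (T0:ℝ) * (α0/2) * ‖β‖^2 ≤ ∑ t, (∑ j, x t ω j * β j)^2 := by
      rw [expand, hsplit]
      have h1 : (T0:ℝ) * (α0 * ‖β‖^2) ≤ (T0:ℝ) * (∑ i, ∑ j, β i * Sig i j * β j) :=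
        mul_le_mul_of_nonneg_left hRE' hT0R.le
      have h2 : -((T0:ℝ)*ε*(∑ i, |β i|)^2)
          ≤ ∑ i, ∑ j, β i * β j * ((∑ t, x t ω i * x t ω j) - (T0:ℝ)*Sig i j) :=
        (abs_le.1 hdev_sum).1
      have h3 : (T0:ℝ)*ε*(∑ i, |β i|)^2 ≤ (T0:ℝ)*ε*(16*(s:ℝ)*‖β‖^2) := by
        rw [hb2]
        exact mul_le_mul_of_nonneg_left l3 (by positivity)
      have h4 : (T0:ℝ)*ε*(16*(s:ℝ)*‖β‖^2) = (T0:ℝ)*(α0/2)*‖β‖^2 := by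
        rw [hεdef]; field_simp; ring
      linarith
    have hgoal : α0/4*‖β‖^2 = 1/(2*(T0:ℝ)) * ((T0:ℝ)*(α0/2)*‖β‖^2) := by
      field_simp
      ring
    calc (α0/4) * ‖β‖^2 = 1/(2*(T0:ℝ)) * ((T0:ℝ)*(α0/2)*‖β‖^2) := hgoal
      _ ≤ 1/(2*(T0:ℝ)) * ∑ t, (∑ j, x t ω j * β j)^2 := by
          exact mul_le_mul_of_nonneg_left hQ (by positivity)
  -- conclusion
  have hadd : (μ G).toReal + (μ Gᶜ).toReal = 1 := by
    have h := measure_add_measure_compl (μ := μ) hGmeas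
    have := congrArg ENNReal.toReal h
    rwa [ENNReal.toReal_add (measure_ne_top _ _) (measure_ne_top _ _), measure_univ,
      ENNReal.toReal_one] at this
  have hGc_exp : (μ Gᶜ).toReal ≤ Real.exp (-((T0:ℝ)*C)/4) := hGc_small.trans hfinal
  have hmono : (μ G).toReal ≤ (μ {ω | ∀ β : EuclideanSpace ℝ (Fin d),
      (∑ j ∈ Sᶜ, |β j|) ≤ 3 * ∑ j ∈ S, |β j| →
      (α0 / 4) * ‖β‖ ^ 2 ≤ (1 / (2 * (T0 : ℝ))) * ∑ t, (∑ j, x t ω j * β j) ^ 2}).toReal :=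
    ENNReal.toReal_mono (measure_ne_top _ _) (measure_mono hsub)
  linarith
end
end
end

section
/- Let Σ₁, Σ₂ ∈ ℝ^{d×d}, let S ⊆ {1,…,d} with |S| = s ≥ 1, and let β ∈ ℂ_S. Suppose α > 0 and δ ≥ 0 satisfy 32sδ ≤ α, that βᵀΣ₁β ≥ α‖β‖₂², and that ‖Σ₂ − Σ₁‖_max ≤ δ. Then βᵀΣ₂β ≥ (α/2)·‖β‖₂². -/
/- STATEMENT 6: transfer of the restricted eigenvalue property between two matrices
that are close in the elementwise maximum norm, over the LASSO cone ℂ_S. -/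

theorem re_transfer_max_norm
    {d : ℕ} (s : ℕ) (hs : 1 ≤ s) (S : Finset (Fin d)) (hcard : S.card = s)
    (Sig1 Sig2 : Matrix (Fin d) (Fin d) ℝ) (β : Fin d → ℝ)
    (hβ : ∑ j ∈ Sᶜ, |β j| ≤ 3 * ∑ j ∈ S, |β j|)
    (α δ : ℝ) (hα : 0 < α) (hδ : 0 ≤ δ) (h32 : 32 * s * δ ≤ α)
    (h1 : α * ∑ j, (β j) ^ 2 ≤ ∑ i, ∑ j, β i * Sig1 i j * β j)
    (hclose : ∀ i j, |Sig2 i j - Sig1 i j| ≤ δ) :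
    (α / 2) * ∑ j, (β j) ^ 2 ≤ ∑ i, ∑ j, β i * Sig2 i j * β j := by
  set T : ℝ := ∑ j, (β j) ^ 2 with hT
  have hTnn : 0 ≤ T := Finset.sum_nonneg fun _ _ => sq_nonneg _
  set L : ℝ := ∑ j, |β j| with hL
  -- L ≤ 4 * ∑_S |β|
  have hsplit : L = ∑ j ∈ S, |β j| + ∑ j ∈ Sᶜ, |β j| := by
    rw [hL, ← Finset.sum_add_sum_compl S]
  have hL4 : L ≤ 4 * ∑ j ∈ S, |β j| := by
    rw [hsplit]; linarith
  have hSnn : (0:ℝ) ≤ ∑ j ∈ S, |β j| := Finset.sum_nonneg fun _ _ => abs_nonneg _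
  -- Cauchy-Schwarz on S
  have hcs : (∑ j ∈ S, |β j|) ^ 2 ≤ s * T := by
    have := sq_sum_le_card_mul_sum_sq (s := S) (f := fun j => |β j|)
    rw [hcard] at this
    calc (∑ j ∈ S, |β j|) ^ 2 ≤ (s:ℝ) * ∑ j ∈ S, |β j| ^ 2 := this
      _ ≤ (s:ℝ) * T := by
          apply mul_le_mul_of_nonneg_left _ (Nat.cast_nonneg s)
          rw [hT]
          apply Finset.sum_le_sum_of_subset_of_nonneg (Finset.subset_univ S)
            (fun _ _ _ => sq_nonneg _) |>.trans_eq'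
          exact Finset.sum_congr rfl fun j _ => by rw [sq_abs]
  have hL2 : L ^ 2 ≤ 16 * s * T := by
    have hLnn : 0 ≤ L := Finset.sum_nonneg fun _ _ => abs_nonneg _
    calc L ^ 2 ≤ (4 * ∑ j ∈ S, |β j|) ^ 2 := by
          apply pow_le_pow_left₀ hLnn hL4
      _ = 16 * (∑ j ∈ S, |β j|) ^ 2 := by ring
      _ ≤ 16 * (s * T) := by linarith
      _ = 16 * s * T := by ring
  -- bound the perturbation
  have hE : |∑ i, ∑ j, β i * Sig2 i j * β j - ∑ i, ∑ j, β i * Sig1 i j * β j|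
      ≤ δ * L ^ 2 := by
    have : ∑ i, ∑ j, β i * Sig2 i j * β j - ∑ i, ∑ j, β i * Sig1 i j * β j
        = ∑ i, ∑ j, β i * (Sig2 i j - Sig1 i j) * β j := by
      rw [← Finset.sum_sub_distrib]
      refine Finset.sum_congr rfl fun i _ => ?_
      rw [← Finset.sum_sub_distrib]
      exact Finset.sum_congr rfl fun j _ => by ring
    rw [this]
    calc |∑ i, ∑ j, β i * (Sig2 i j - Sig1 i j) * β j|
        ≤ ∑ i, |∑ j, β i * (Sig2 i j - Sig1 i j) * β j| :=
          Finset.abs_sum_le_sum_abs _ _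
      _ ≤ ∑ i, ∑ j, |β i * (Sig2 i j - Sig1 i j) * β j| :=
          Finset.sum_le_sum fun i _ => Finset.abs_sum_le_sum_abs _ _
      _ ≤ ∑ i, ∑ j, |β i| * δ * |β j| := by
          refine Finset.sum_le_sum fun i _ => Finset.sum_le_sum fun j _ => ?_
          rw [abs_mul, abs_mul]
          exact mul_le_mul_of_nonneg_right
            (mul_le_mul_of_nonneg_left (hclose i j) (abs_nonneg _)) (abs_nonneg _)
      _ = δ * L ^ 2 := by
          rw [sq, hL, Finset.sum_mul_sum, Finset.mul_sum]
          exact Finset.sum_congr rfl fun i _ => by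
            rw [Finset.mul_sum]
            exact Finset.sum_congr rfl fun j _ => by ring
  have hdL : δ * L ^ 2 ≤ (α / 2) * T := by
    calc δ * L ^ 2 ≤ δ * (16 * s * T) := mul_le_mul_of_nonneg_left hL2 hδ
      _ = (16 * s * δ) * T := by ring
      _ ≤ (α / 2) * T := by
          apply mul_le_mul_of_nonneg_right _ hTnn
          linarith
  have := abs_le.mp hE
  linarith [this.1]
end

section
/- There are d2 agents: for each agent k ∈ {1,…,d2}, let x_1^{(k)},…,x_{T0}^{(k)} be i.i.d. random vectors in ℝ^{d1} with ‖x^{(k)}‖₂ ≤ 1 almost surely, the families being independent across agents, and let Σ^{(k)} = E[x_1^{(k)} x_1^{(k)ᵀ}]. Let S ⊆ {1,…,d1} with |S| = s ≥ 1 and α0 > 0, and assume that for every agent k, βᵀΣ^{(k)}β ≥ α0‖β‖₂² for all β ∈ ℂ_S. Let C(s) = (√(α0/(64s) + 1) − 1)². Then for every T0 ≥ 2·log(2d1² + d1)/C(s), with probability at least 1 − d2·exp(−T0·C(s)/2), it holds simultaneously for all tuples (Δ^{(1)},…,Δ^{(d2)}) with every Δ^{(k)} ∈ ℂ_S that (1/(2T0))·Σ_{k=1}^{d2}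 Σ_{i=1}^{T0} ⟨x_i^{(k)}, Δ^{(k)}⟩² ≥ (α0/4)·Σ_{k=1}^{d2} ‖Δ^{(k)}‖₂². -/
noncomputable section
open MeasureTheory ProbabilityTheory Real

/-- cosh-type bound: for `|y| ≤ 1`, `(e^y + e^{-y})/2 ≤ 1 + y^2`. -/
lemma cosh_le_one_add_sq {y : ℝ} (hy : |y| ≤ 1) :
    (Real.exp y + Real.exp (-y)) / 2 ≤ 1 + y ^ 2 := by
  have h1 := Real.exp_bound hy (n := 3) (by norm_num)
  have h2 := Real.exp_bound (x := -y) (by rwa [abs_neg]) (n := 3) (by norm_num)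
  have e1 : ∑ m ∈ Finset.range 3, y ^ m / m.factorial = 1 + y + y ^ 2 / 2 := by
    simp [Finset.sum_range_succ, Nat.factorial]
  have e2 : ∑ m ∈ Finset.range 3, (-y) ^ m / m.factorial = 1 - y + y ^ 2 / 2 := by
    simp [Finset.sum_range_succ, Nat.factorial]; ring
  rw [e1] at h1
  rw [e2] at h2
  norm_num [Nat.factorial] at h1 h2
  have ha1 := (abs_le.1 h1).2
  have ha2 := (abs_le.1 h2).2
  have hy3 : |y| ^ 3 ≤ y ^ 2 := by
    have : |y| ^ 3 ≤ |y| ^ 2 := pow_le_pow_of_le_one (abs_nonneg y) hy (by norm_num)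
    simpa [sq_abs] using this
  have hyn : |(-y)| ^ 3 ≤ y ^ 2 := by rwa [abs_neg]
  nlinarith [sq_nonneg y]

variable {Ω : Type*} [MeasurableSpace Ω] {μ : Measure Ω} [IsProbabilityMeasure μ]

lemma integrable_of_abs_le {f : Ω → ℝ} (hf : Measurable f) {c : ℝ}
    (h : ∀ᵐ ω ∂μ, |f ω| ≤ c) : Integrable f μ :=
  (integrable_const c).mono' hf.aestronglyMeasurable (by simpa [Real.norm_eq_abs] using h)

/-- mgf bound for a centered variable bounded by 2. -/
lemma mgf_le_of_abs_le_two {Y : Ω → ℝ} (hY : Measurable Y)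
    (hbdd : ∀ᵐ ω ∂μ, |Y ω| ≤ 2) (hmean : ∫ ω, Y ω ∂μ = 0)
    {l : ℝ} (hl : |l| ≤ 1 / 2) :
    ∫ ω, Real.exp (l * Y ω) ∂μ ≤ Real.exp (4 * l ^ 2) := by
  have hYint : Integrable Y μ := integrable_of_abs_le hY hbdd
  -- pointwise convexity bound
  have hpt : ∀ᵐ ω ∂μ, Real.exp (l * Y ω) ≤
      ((2 - Y ω) / 4) * Real.exp (-(2 * l)) + ((2 + Y ω) / 4) * Real.exp (2 * l) := by
    filter_upwards [hbdd] with ω hω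
    have h1 : (0:ℝ) ≤ (2 - Y ω) / 4 := by cases abs_le.1 hω; linarith
    have h2 : (0:ℝ) ≤ (2 + Y ω) / 4 := by cases abs_le.1 hω; linarith
    have h3 : (2 - Y ω) / 4 + (2 + Y ω) / 4 = 1 := by ring
    have := convexOn_exp.2 (Set.mem_univ (-(2 * l))) (Set.mem_univ (2 * l)) h1 h2 h3
    simp only [smul_eq_mul] at this
    refine le_trans (le_of_eq ?_) this
    congr 1; ring
  have hexp_int : Integrable (fun ω => Real.exp (l * Y ω)) μ := by
    refine integrable_of_abs_le (by fun_prop) (c := Real.exp 1) ?_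
    filter_upwards [hbdd] with ω hω
    rw [abs_of_pos (Real.exp_pos _), Real.exp_le_exp]
    calc l * Y ω ≤ |l * Y ω| := le_abs_self _
    _ = |l| * |Y ω| := abs_mul _ _
    _ ≤ (1/2) * 2 := by
        apply mul_le_mul hl hω (abs_nonneg _); norm_num
    _ = 1 := by norm_num
  have hrhs_int : Integrable (fun ω =>
      ((2 - Y ω) / 4) * Real.exp (-(2 * l)) + ((2 + Y ω) / 4) * Real.exp (2 * l)) μ := by
    exact ((((integrable_const (2:ℝ)).sub hYint).div_const 4).mul_const _).add
      ((((integrable_const (2:ℝ)).add hYint).div_const 4).mul_const _)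
  have hint := integral_mono_ae hexp_int hrhs_int hpt
  have hval : ∫ ω, (((2 - Y ω) / 4) * Real.exp (-(2 * l)) + ((2 + Y ω) / 4) * Real.exp (2 * l)) ∂μ
      = (Real.exp (2 * l) + Real.exp (-(2 * l))) / 2 := by
    rw [integral_add, integral_mul_const, integral_mul_const]
    · have i1 : ∫ ω, (2 - Y ω) / 4 ∂μ = 1 / 2 := by
        rw [integral_div, integral_sub (integrable_const _) hYint, hmean]
        simp; norm_num
      have i2 : ∫ ω, (2 + Y ω) / 4 ∂μ = 1 / 2 := by
        rw [integral_div, integral_add (integrable_const _) hYint, hmean]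
        simp; norm_num
      rw [i1, i2]; ring
    · exact (((integrable_const (2:ℝ)).sub hYint).div_const 4).mul_const _
    · exact (((integrable_const (2:ℝ)).add hYint).div_const 4).mul_const _
  have hcosh : (Real.exp (2 * l) + Real.exp (-(2 * l))) / 2 ≤ 1 + (2 * l) ^ 2 := by
    apply cosh_le_one_add_sq
    rw [abs_mul, abs_two]
    nlinarith [abs_nonneg l]
  calc ∫ ω, Real.exp (l * Y ω) ∂μ ≤ _ := hint
  _ = (Real.exp (2 * l) + Real.exp (-(2 * l))) / 2 := hval
  _ ≤ 1 + (2 * l) ^ 2 := hcosh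
  _ = 1 + 4 * l ^ 2 := by ring
  _ ≤ Real.exp (4 * l ^ 2) := by
      have := Real.add_one_le_exp (4 * l ^ 2); linarith

/-- Chernoff bound for a sum of independent centered variables bounded by 2. -/
lemma chernoff_sum_bounded {T0 : ℕ} {Y : Fin T0 → Ω → ℝ}
    (hmeas : ∀ i, Measurable (Y i))
    (hindep : iIndepFun Y μ)
    (hbdd : ∀ i, ∀ᵐ ω ∂μ, |Y i ω| ≤ 2)
    (hmean : ∀ i, ∫ ω, Y i ω ∂μ = 0)
    {l a : ℝ} (hl0 : 0 ≤ l) (hl : l ≤ 1 / 2) :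
    (μ {ω | a ≤ ∑ i, Y i ω}).toReal ≤ Real.exp (-(l * a) + T0 * (4 * l ^ 2)) := by
  have habs : |l| ≤ 1 / 2 := by rwa [abs_of_nonneg hl0]
  have hint : ∀ i, Integrable (fun ω => Real.exp (l * Y i ω)) μ := by
    intro i
    refine integrable_of_abs_le (by fun_prop) (c := Real.exp 1) ?_
    filter_upwards [hbdd i] with ω hω
    rw [abs_of_pos (Real.exp_pos _), Real.exp_le_exp]
    calc l * Y i ω ≤ |l * Y i ω| := le_abs_self _
    _ = |l| * |Y i ω| := abs_mul _ _
    _ ≤ (1/2) * 2 := mul_le_mul habs hω (abs_nonneg _) (by norm_num)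
    _ = 1 := by norm_num
  have hX : Measurable (∑ i, Y i) := by
    rw [show (∑ i, Y i) = fun ω => ∑ i, Y i ω from funext fun ω => Finset.sum_apply ω _ _]
    exact Finset.measurable_sum _ fun i _ => hmeas i
  have hXint : Integrable (fun ω => Real.exp (l * (∑ i, Y i) ω)) μ := by
    refine integrable_of_abs_le (by fun_prop) (c := Real.exp (T0 * 1)) ?_
    have hb : ∀ᵐ ω ∂μ, ∀ i, |Y i ω| ≤ 2 := ae_all_iff.2 hbdd
    filter_upwards [hb] with ω hω
    rw [abs_of_pos (Real.exp_pos _), Real.exp_le_exp, Finset.sum_apply, Finset.mul_sum]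
    calc ∑ i, l * Y i ω ≤ ∑ i : Fin T0, (1:ℝ) := by
          refine Finset.sum_le_sum fun i _ => ?_
          calc l * Y i ω ≤ |l * Y i ω| := le_abs_self _
          _ = |l| * |Y i ω| := abs_mul _ _
          _ ≤ (1/2) * 2 := mul_le_mul habs (hω i) (abs_nonneg _) (by norm_num)
          _ = 1 := by norm_num
    _ = T0 * 1 := by simp
  have hchern := measure_ge_le_exp_mul_mgf (μ := μ) (X := ∑ i, Y i) a hl0 hXint
  have hmgf : mgf (∑ i, Y i) μ l = ∏ i, mgf (Y i) μ l := hindep.mgf_sum hmeas Finset.univ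
  have hone : ∀ i, mgf (Y i) μ l ≤ Real.exp (4 * l ^ 2) := fun i =>
    mgf_le_of_abs_le_two (hmeas i) (hbdd i) (hmean i) habs
  have hprod : ∏ i, mgf (Y i) μ l ≤ Real.exp (4 * l ^ 2) ^ (T0 : ℕ) := by
    calc ∏ i, mgf (Y i) μ l ≤ ∏ i : Fin T0, Real.exp (4 * l ^ 2) :=
          Finset.prod_le_prod (fun i _ => mgf_nonneg) (fun i _ => hone i)
    _ = Real.exp (4 * l ^ 2) ^ (T0 : ℕ) := by simp
  have hset : {ω | a ≤ ∑ i, Y i ω} = {ω | a ≤ (∑ i, Y i) ω} := by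
    ext ω; simp [Finset.sum_apply]
  rw [hset]
  calc (μ {ω | a ≤ (∑ i, Y i) ω}).toReal ≤ Real.exp (-l * a) * mgf (∑ i, Y i) μ l := hchern
  _ ≤ Real.exp (-l * a) * Real.exp (4 * l ^ 2) ^ (T0 : ℕ) := by
      rw [hmgf]; exact mul_le_mul_of_nonneg_left hprod (Real.exp_pos _).le
  _ = Real.exp (-(l * a) + T0 * (4 * l ^ 2)) := by
      rw [← Real.exp_nat_mul, ← Real.exp_add]; ring_nf

end

noncomputable section
open MeasureTheory ProbabilityTheory
open scoped ENNReal


lemma sqrt_C_facts {u : ℝ} (hu : 0 < u) :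
    0 < (Real.sqrt (u + 1) - 1) ^ 2 ∧ (Real.sqrt (u + 1) - 1) ^ 2 ≤ u ^ 2 / 4 := by
  have hr2 : Real.sqrt (u + 1) ^ 2 = u + 1 := Real.sq_sqrt (by positivity)
  have hr0 : 0 ≤ Real.sqrt (u + 1) := Real.sqrt_nonneg _
  have hr1 : 1 ≤ Real.sqrt (u + 1) := by nlinarith
  have hrgt : 1 < Real.sqrt (u + 1) := by nlinarith
  constructor
  · nlinarith
  · have h4 : 0 ≤ (Real.sqrt (u + 1) + 1) ^ 2 - 4 := by nlinarith
    nlinarith [mul_nonneg (sq_nonneg (Real.sqrt (u + 1) - 1)) h4]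

set_option maxHeartbeats 3200000 in
theorem multi_agent_rsc_condition
    {d1 d2 : ℕ} (hd1 : 0 < d1) (hd2 : 0 < d2)
    {Ω : Type*} [MeasurableSpace Ω] (μ : Measure Ω) [IsProbabilityMeasure μ]
    (T0 : ℕ) (hT0 : 0 < T0)
    (x : Fin d2 → Fin T0 → Ω → EuclideanSpace ℝ (Fin d1))
    (hx_meas : ∀ k i, Measurable (x k i))
    -- i.i.d. within each agent:
    (hx_indep : ∀ k, iIndepFun (x k) μ)
    (hx_ident : ∀ k i j, IdentDistrib (x k i) (x k j) μ μ)
    -- independent across agents: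
    (hx_agents_indep : iIndepFun
      (fun k => fun ω => fun i : Fin T0 => x k i ω) μ)
    (hx_bound : ∀ k i, ∀ᵐ ω ∂μ, ‖x k i ω‖ ≤ 1)
    -- the support S, |S| = s ≥ 1:
    (S : Finset (Fin d1)) (s : ℕ) (hs : 1 ≤ s) (hcard : S.card = s)
    -- per-agent population Gram matrices:
    (Sig : Fin d2 → Matrix (Fin d1) (Fin d1) ℝ)
    (hSig : ∀ k i j, Sig k i j = ∫ ω, x k ⟨0, hT0⟩ ω i * x k ⟨0, hT0⟩ ω j ∂μ)
    -- restricted eigenvalue condition for every agent: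
    (α0 : ℝ) (hα0 : 0 < α0)
    (hRE : ∀ k, ∀ β : EuclideanSpace ℝ (Fin d1),
      (∑ j ∈ Sᶜ, |β j|) ≤ 3 * ∑ j ∈ S, |β j| →
      α0 * ‖β‖ ^ 2 ≤ ∑ i, ∑ j, β i * Sig k i j * β j)
    -- T0 large enough:
    (hT0_big : 2 * Real.log (2 * (d1 : ℝ) ^ 2 + d1) /
      ((Real.sqrt (α0 / (64 * s) + 1) - 1) ^ 2) ≤ (T0 : ℝ)) :
    1 - d2 * Real.exp (-((T0 : ℝ) * (Real.sqrt (α0 / (64 * s) + 1) - 1) ^ 2) / 2) ≤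
      (μ {ω | ∀ Δ : Fin d2 → EuclideanSpace ℝ (Fin d1),
        (∀ k, (∑ j ∈ Sᶜ, |Δ k j|) ≤ 3 * ∑ j ∈ S, |Δ k j|) →
        (α0 / 4) * ∑ k, ‖Δ k‖ ^ 2 ≤
          (1 / (2 * (T0 : ℝ))) * ∑ k, ∑ i, (∑ j, x k i ω j * Δ k j) ^ 2}).toReal := by
  classical
  have hs0 : (0:ℝ) < s := by exact_mod_cast hs
  have hs1 : (1:ℝ) ≤ s := by exact_mod_cast hs
  obtain ⟨u, hu_def⟩ : ∃ u : ℝ, α0 / (64 * (s:ℝ)) = u := ⟨_, rfl⟩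
  have hu : 0 < u := by rw [← hu_def]; positivity
  rw [hu_def] at hT0_big ⊢
  revert hT0_big
  generalize hC_def : (Real.sqrt (u + 1) - 1) ^ 2 = C
  intro hT0_big
  obtain ⟨t, ht_def⟩ : ∃ t : ℝ, 2 * u = t := ⟨_, rfl⟩
  obtain ⟨l, hl_def⟩ : ∃ l : ℝ, u / 4 = l := ⟨_, rfl⟩
  -- coordinate maps are measurable
  have hcoord : ∀ j : Fin d1, Measurable fun v : EuclideanSpace ℝ (Fin d1) => v j :=
    fun j => (EuclideanSpace.proj (𝕜 := ℝ) j).continuous.measurable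
  -- Euclidean norm squared
  have hnorm : ∀ v : EuclideanSpace ℝ (Fin d1), ‖v‖ ^ 2 = ∑ j, v j ^ 2 := by
    intro v
    rw [EuclideanSpace.norm_eq, Real.sq_sqrt (by positivity)]
    simp [Real.norm_eq_abs, sq_abs]
  -- coordinates are a.s. bounded by 1
  have hxb : ∀ k i (j : Fin d1), ∀ᵐ ω ∂μ, |x k i ω j| ≤ 1 := by
    intro k i j
    filter_upwards [hx_bound k i] with ω hω
    refine le_trans ?_ hω
    rw [EuclideanSpace.norm_eq, ← Real.sqrt_sq_eq_abs]
    apply Real.sqrt_le_sqrt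
    calc x k i ω j ^ 2 = ‖x k i ω j‖ ^ 2 := by rw [Real.norm_eq_abs, sq_abs]
    _ ≤ ∑ j', ‖x k i ω j'‖ ^ 2 :=
        Finset.single_le_sum (f := fun j' => ‖x k i ω j'‖ ^ 2)
          (fun _ _ => by positivity) (Finset.mem_univ j)
  have hprodb : ∀ k i (j j' : Fin d1), ∀ᵐ ω ∂μ, |x k i ω j * x k i ω j'| ≤ 1 := by
    intro k i j j'
    filter_upwards [hxb k i j, hxb k i j'] with ω h1 h2
    rw [abs_mul]
    exact mul_le_one₀ h1 (abs_nonneg _) h2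
  have hprod_meas : ∀ k i (j j' : Fin d1),
      Measurable fun ω => x k i ω j * x k i ω j' := fun k i j j' =>
    (((hcoord j).comp (hx_meas k i)).mul ((hcoord j').comp (hx_meas k i)))
  -- all means equal Sig
  have hm_eq : ∀ k (j j' : Fin d1) (i : Fin T0),
      ∫ ω, x k i ω j * x k i ω j' ∂μ = Sig k j j' := by
    intro k j j' i
    have hid := (hx_ident k i ⟨0, hT0⟩).comp
      (u := fun v : EuclideanSpace ℝ (Fin d1) => v j * v j') ((hcoord j).mul (hcoord j'))
    exact hid.integral_eq.trans (hSig k j j').symm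
  -- Sig is bounded by 1
  have hSig_b : ∀ k (j j' : Fin d1), |Sig k j j'| ≤ 1 := by
    intro k j j'
    rw [← hm_eq k j j' ⟨0, hT0⟩, ← Real.norm_eq_abs]
    calc ‖∫ ω, x k ⟨0, hT0⟩ ω j * x k ⟨0, hT0⟩ ω j' ∂μ‖ ≤ 1 * (μ Set.univ).toReal :=
        norm_integral_le_of_norm_le_const (by
          filter_upwards [hprodb k ⟨0, hT0⟩ j j'] with ω hω
          simpa only [Real.norm_eq_abs] using hω)
    _ = 1 := by simp
  -- α0 ≤ 1
  have hα1 : α0 ≤ 1 := by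
    obtain ⟨j0, hj0⟩ : S.Nonempty := Finset.card_pos.mp (by omega)
    set β : EuclideanSpace ℝ (Fin d1) := EuclideanSpace.single j0 (1:ℝ) with hβ
    have hβj : ∀ j, β j = if j = j0 then 1 else 0 := fun j =>
      EuclideanSpace.single_apply j0 1 j
    have hcone : (∑ j ∈ Sᶜ, |β j|) ≤ 3 * ∑ j ∈ S, |β j| := by
      have h0 : (∑ j ∈ Sᶜ, |β j|) = 0 := by
        apply Finset.sum_eq_zero
        intro j hj
        have : j ≠ j0 := fun h => (Finset.mem_compl.mp hj) (h ▸ hj0)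
        simp [hβj j, this]
      rw [h0]
      positivity
    have h1 := hRE ⟨0, hd2⟩ β hcone
    have hβn : ‖β‖ ^ 2 = 1 := by
      rw [hβ, EuclideanSpace.norm_single]; norm_num
    have hcollapse : (∑ i, ∑ j, β i * Sig ⟨0, hd2⟩ i j * β j) = Sig ⟨0, hd2⟩ j0 j0 := by
      rw [Finset.sum_eq_single j0]
      · rw [Finset.sum_eq_single j0]
        · simp [hβj]
        · intro j _ hj; simp [hβj, hj]
        · intro h; exact absurd (Finset.mem_univ j0) h
      · intro i _ hi
        apply Finset.sum_eq_zero
        intro j _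
        simp [hβj, hi]
      · intro h; exact absurd (Finset.mem_univ j0) h
    have hSb : Sig ⟨0, hd2⟩ j0 j0 ≤ 1 := le_trans (le_abs_self _) (hSig_b _ _ _)
    rw [hβn] at h1
    rw [hcollapse] at h1
    linarith
  have hu64 : u ≤ 1 / 64 := by
    rw [← hu_def, div_le_div_iff₀ (by positivity) (by norm_num)]
    nlinarith
  -- properties of C
  have hC4 : C ≤ u ^ 2 / 4 := hC_def ▸ (sqrt_C_facts hu).2
  have hCpos : 0 < C := hC_def ▸ (sqrt_C_facts hu).1
  have hl0 : 0 ≤ l := by rw [← hl_def]; positivity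
  have hlhalf : l ≤ 1 / 2 := by rw [← hl_def]; linarith
  have htpos : 0 < t := by rw [← ht_def]; positivity
  have hT0nn : (0:ℝ) ≤ T0 := Nat.cast_nonneg _
  -- Chernoff bound, upper tail
  have hBp : ∀ (k : Fin d2) (j j' : Fin d1),
      μ {ω | (T0:ℝ) * t ≤ ∑ i, (x k i ω j * x k i ω j' - Sig k j j')} ≤
        ENNReal.ofReal (Real.exp (-((T0:ℝ) * C))) := by
    intro k j j'
    have hmeasZ : ∀ i : Fin T0,
        Measurable fun ω => x k i ω j * x k i ω j' - Sig k j j' :=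
      fun i => (hprod_meas k i j j').sub measurable_const
    have hindepZ : iIndepFun
        (fun i (ω : Ω) => x k i ω j * x k i ω j' - Sig k j j') μ :=
      (hx_indep k).comp
        (fun _ (v : EuclideanSpace ℝ (Fin d1)) => v j * v j' - Sig k j j')
        (fun _ => ((hcoord j).mul (hcoord j')).sub measurable_const)
    have hbddZ : ∀ i, ∀ᵐ ω ∂μ, |x k i ω j * x k i ω j' - Sig k j j'| ≤ 2 := by
      intro i
      filter_upwards [hprodb k i j j'] with ω hω
      have h2 := hSig_b k j j'
      calc |x k i ω j * x k i ω j' - Sig k j j'|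
          ≤ |x k i ω j * x k i ω j'| + |Sig k j j'| := abs_sub _ _
      _ ≤ 2 := by linarith
    have hmeanZ : ∀ i, ∫ ω, (x k i ω j * x k i ω j' - Sig k j j') ∂μ = 0 := by
      intro i
      rw [integral_sub (integrable_of_abs_le (hprod_meas k i j j') (hprodb k i j j'))
        (integrable_const _), hm_eq k j j' i, integral_const]
      simp
    have h := chernoff_sum_bounded hmeasZ hindepZ hbddZ hmeanZ hl0 hlhalf (a := (T0:ℝ) * t)
    have hexp : Real.exp (-(l * ((T0:ℝ) * t)) + (T0:ℝ) * (4 * l ^ 2)) ≤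
        Real.exp (-((T0:ℝ) * C)) := by
      rw [Real.exp_le_exp]
      have h1 : -(l * ((T0:ℝ) * t)) + (T0:ℝ) * (4 * l ^ 2) = -((T0:ℝ) * (u ^ 2 / 4)) := by
        rw [← hl_def, ← ht_def]; ring
      have h2 := mul_le_mul_of_nonneg_left hC4 hT0nn
      rw [h1]; linarith
    rw [← ENNReal.ofReal_toReal (measure_ne_top μ _)]
    exact ENNReal.ofReal_le_ofReal (h.trans hexp)
  -- Chernoff bound, lower tail
  have hBm : ∀ (k : Fin d2) (j j' : Fin d1),
      μ {ω | (T0:ℝ) * t ≤ ∑ i, (Sig k j j' - x k i ω j * x k i ω j')} ≤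
        ENNReal.ofReal (Real.exp (-((T0:ℝ) * C))) := by
    intro k j j'
    have hmeasZ : ∀ i : Fin T0,
        Measurable fun ω => Sig k j j' - x k i ω j * x k i ω j' :=
      fun i => measurable_const.sub (hprod_meas k i j j')
    have hindepZ : iIndepFun
        (fun i (ω : Ω) => Sig k j j' - x k i ω j * x k i ω j') μ :=
      (hx_indep k).comp
        (fun _ (v : EuclideanSpace ℝ (Fin d1)) => Sig k j j' - v j * v j')
        (fun _ => measurable_const.sub ((hcoord j).mul (hcoord j')))
    have hbddZ : ∀ i, ∀ᵐ ω ∂μ, |Sig k j j' - x k i ω j * x k i ω j'| ≤ 2 := by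
      intro i
      filter_upwards [hprodb k i j j'] with ω hω
      have h2 := hSig_b k j j'
      calc |Sig k j j' - x k i ω j * x k i ω j'|
          ≤ |Sig k j j'| + |x k i ω j * x k i ω j'| := abs_sub _ _
      _ ≤ 2 := by linarith
    have hmeanZ : ∀ i, ∫ ω, (Sig k j j' - x k i ω j * x k i ω j') ∂μ = 0 := by
      intro i
      rw [integral_sub (integrable_const _)
        (integrable_of_abs_le (hprod_meas k i j j') (hprodb k i j j')),
        hm_eq k j j' i, integral_const]
      simp
    have h := chernoff_sum_bounded hmeasZ hindepZ hbddZ hmeanZ hl0 hlhalf (a := (T0:ℝ) * t)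
    have hexp : Real.exp (-(l * ((T0:ℝ) * t)) + (T0:ℝ) * (4 * l ^ 2)) ≤
        Real.exp (-((T0:ℝ) * C)) := by
      rw [Real.exp_le_exp]
      have h1 : -(l * ((T0:ℝ) * t)) + (T0:ℝ) * (4 * l ^ 2) = -((T0:ℝ) * (u ^ 2 / 4)) := by
        rw [← hl_def, ← ht_def]; ring
      have h2 := mul_le_mul_of_nonneg_left hC4 hT0nn
      rw [h1]; linarith
    rw [← ENNReal.ofReal_toReal (measure_ne_top μ _)]
    exact ENNReal.ofReal_le_ofReal (h.trans hexp)
  -- the per-agent good event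
  set G : Fin d2 → Set Ω := fun k =>
    {ω | ∀ j j' : Fin d1,
      |(∑ i, x k i ω j * x k i ω j') - (T0:ℝ) * Sig k j j'| ≤ (T0:ℝ) * t} with hG_def
  have hGmeas : ∀ k, MeasurableSet (G k) := by
    intro k
    have : G k = ⋂ (j : Fin d1), ⋂ (j' : Fin d1),
        {ω | |(∑ i, x k i ω j * x k i ω j') - (T0:ℝ) * Sig k j j'| ≤ (T0:ℝ) * t} := by
      ext ω; simp [hG_def, Set.mem_iInter]
    rw [this]
    exact MeasurableSet.iInter fun j => MeasurableSet.iInter fun j' =>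
      measurableSet_le
        (((Finset.measurable_sum _ fun i _ => hprod_meas k i j j').sub measurable_const).abs)
        measurable_const
  -- sum rearrangement for centered sums
  have hsum_sub : ∀ (k : Fin d2) (j j' : Fin d1) (ω : Ω),
      ∑ i, (x k i ω j * x k i ω j' - Sig k j j') =
        (∑ i, x k i ω j * x k i ω j') - (T0:ℝ) * Sig k j j' := by
    intro k j j' ω
    rw [Finset.sum_sub_distrib, Finset.sum_const, Finset.card_univ, Fintype.card_fin,
      nsmul_eq_mul]
  have hsum_sub' : ∀ (k : Fin d2) (j j' : Fin d1) (ω : Ω),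
      ∑ i, (Sig k j j' - x k i ω j * x k i ω j') =
        (T0:ℝ) * Sig k j j' - (∑ i, x k i ω j * x k i ω j') := by
    intro k j j' ω
    rw [Finset.sum_sub_distrib, Finset.sum_const, Finset.card_univ, Fintype.card_fin,
      nsmul_eq_mul]
  -- per-agent bad-event bound
  have hGc : ∀ k, μ ((G k)ᶜ) ≤ ENNReal.ofReal (Real.exp (-((T0:ℝ) * C) / 2)) := by
    intro k
    have hsub : (G k)ᶜ ⊆ ⋃ p : Fin d1 × Fin d1,
        ({ω | (T0:ℝ) * t ≤ ∑ i, (x k i ω p.1 * x k i ω p.2 - Sig k p.1 p.2)} ∪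
         {ω | (T0:ℝ) * t ≤ ∑ i, (Sig k p.1 p.2 - x k i ω p.1 * x k i ω p.2)}) := by
      intro ω hω
      simp only [hG_def, Set.mem_compl_iff, Set.mem_setOf_eq, not_forall, not_le] at hω
      obtain ⟨j, j', hjj⟩ := hω
      refine Set.mem_iUnion.mpr ⟨(j, j'), ?_⟩
      rcases le_abs.mp hjj.le with h | h
      · left
        show (T0:ℝ) * t ≤ _
        rw [hsum_sub k j j' ω]
        exact h
      · right
        show (T0:ℝ) * t ≤ _
        rw [hsum_sub' k j j' ω]
        linarith
    have hDpos : (0:ℝ) < 2 * (d1:ℝ) ^ 2 + d1 := by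
      have : (1:ℝ) ≤ d1 := by exact_mod_cast hd1
      nlinarith
    have hkey : ((d1 * d1 : ℕ) : ℝ) * (2 * Real.exp (-((T0:ℝ) * C))) ≤
        Real.exp (-((T0:ℝ) * C) / 2) := by
      have hlogD : Real.log (2 * (d1:ℝ) ^ 2 + d1) ≤ (T0:ℝ) * C / 2 := by
        have := (div_le_iff₀ hCpos).mp hT0_big
        linarith
      have hDle : 2 * (d1:ℝ) ^ 2 + d1 ≤ Real.exp ((T0:ℝ) * C / 2) := by
        rw [← Real.exp_log hDpos]
        exact Real.exp_le_exp.mpr hlogD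
      have hd1nn : (0:ℝ) ≤ d1 := Nat.cast_nonneg _
      have e1 : ((d1 * d1 : ℕ) : ℝ) * (2 * Real.exp (-((T0:ℝ) * C))) =
          (2 * (d1:ℝ) ^ 2) * Real.exp (-((T0:ℝ) * C)) := by push_cast; ring
      have e2 : (2 * (d1:ℝ) ^ 2) * Real.exp (-((T0:ℝ) * C)) ≤
          (2 * (d1:ℝ) ^ 2 + d1) * Real.exp (-((T0:ℝ) * C)) := by
        have := Real.exp_nonneg (-((T0:ℝ) * C))
        nlinarith
      have e3 : (2 * (d1:ℝ) ^ 2 + d1) * Real.exp (-((T0:ℝ) * C)) ≤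
          Real.exp ((T0:ℝ) * C / 2) * Real.exp (-((T0:ℝ) * C)) :=
        mul_le_mul_of_nonneg_right hDle (Real.exp_nonneg _)
      have e4 : Real.exp ((T0:ℝ) * C / 2) * Real.exp (-((T0:ℝ) * C)) =
          Real.exp (-((T0:ℝ) * C) / 2) := by
        rw [← Real.exp_add]; ring_nf
      rw [e1, ← e4]
      linarith
    calc μ ((G k)ᶜ) ≤ ∑ p : Fin d1 × Fin d1,
        μ ({ω | (T0:ℝ) * t ≤ ∑ i, (x k i ω p.1 * x k i ω p.2 - Sig k p.1 p.2)} ∪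
           {ω | (T0:ℝ) * t ≤ ∑ i, (Sig k p.1 p.2 - x k i ω p.1 * x k i ω p.2)}) :=
      (measure_mono hsub).trans (measure_iUnion_fintype_le μ _)
    _ ≤ ∑ _p : Fin d1 × Fin d1, ENNReal.ofReal (2 * Real.exp (-((T0:ℝ) * C))) := by
      refine Finset.sum_le_sum fun p _ => ?_
      refine (measure_union_le _ _).trans ?_
      rw [show (2:ℝ) * Real.exp (-((T0:ℝ) * C)) =
        Real.exp (-((T0:ℝ) * C)) + Real.exp (-((T0:ℝ) * C)) from by ring,
        ENNReal.ofReal_add (Real.exp_nonneg _) (Real.exp_nonneg _)]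
      exact add_le_add (hBp k p.1 p.2) (hBm k p.1 p.2)
    _ = ((d1 * d1 : ℕ) : ℝ≥0∞) * ENNReal.ofReal (2 * Real.exp (-((T0:ℝ) * C))) := by
      rw [Finset.sum_const, Finset.card_univ, nsmul_eq_mul]
      congr 1
      simp
    _ = ENNReal.ofReal (((d1 * d1 : ℕ) : ℝ) * (2 * Real.exp (-((T0:ℝ) * C)))) := by
      rw [← ENNReal.ofReal_natCast, ← ENNReal.ofReal_mul (Nat.cast_nonneg _)]
    _ ≤ ENNReal.ofReal (Real.exp (-((T0:ℝ) * C) / 2)) := ENNReal.ofReal_le_ofReal hkey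
  -- global union bound
  have hGmeasAll : MeasurableSet (⋃ k, (G k)ᶜ) :=
    MeasurableSet.iUnion fun k => (hGmeas k).compl
  have hUb : μ (⋃ k, (G k)ᶜ) ≤ ENNReal.ofReal (d2 * Real.exp (-((T0:ℝ) * C) / 2)) := by
    calc μ (⋃ k, (G k)ᶜ) ≤ ∑ k : Fin d2, μ ((G k)ᶜ) := measure_iUnion_fintype_le μ _
    _ ≤ ∑ _k : Fin d2, ENNReal.ofReal (Real.exp (-((T0:ℝ) * C) / 2)) :=
      Finset.sum_le_sum fun k _ => hGc k
    _ = ENNReal.ofReal (d2 * Real.exp (-((T0:ℝ) * C) / 2)) := by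
      rw [Finset.sum_const, Finset.card_univ, Fintype.card_fin, nsmul_eq_mul,
        ← ENNReal.ofReal_natCast, ← ENNReal.ofReal_mul (Nat.cast_nonneg _)]
  have hGlower : 1 - (d2:ℝ) * Real.exp (-((T0:ℝ) * C) / 2) ≤ (μ (⋂ k, G k)).toReal := by
    have hcompl : (⋂ k, G k) = (⋃ k, (G k)ᶜ)ᶜ := by
      rw [Set.compl_iUnion]
      simp
    rw [hcompl, prob_compl_eq_one_sub hGmeasAll,
      ENNReal.toReal_sub_of_le prob_le_one ENNReal.one_ne_top]
    have h2 : (μ (⋃ k, (G k)ᶜ)).toReal ≤ d2 * Real.exp (-((T0:ℝ) * C) / 2) := by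
      have h3 := ENNReal.toReal_mono ENNReal.ofReal_ne_top hUb
      rwa [ENNReal.toReal_ofReal (by positivity)] at h3
    simp only [ENNReal.toReal_one]
    linarith
  -- deterministic part: on the good event, RSC holds
  have hsubEvent : (⋂ k, G k) ⊆
      {ω | ∀ Δ : Fin d2 → EuclideanSpace ℝ (Fin d1),
        (∀ k, (∑ j ∈ Sᶜ, |Δ k j|) ≤ 3 * ∑ j ∈ S, |Δ k j|) →
        (α0 / 4) * ∑ k, ‖Δ k‖ ^ 2 ≤
          (1 / (2 * (T0 : ℝ))) * ∑ k, ∑ i, (∑ j, x k i ω j * Δ k j) ^ 2} := by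
    intro ω hω Δ hΔ
    have hGk : ∀ k (j j' : Fin d1),
        |(∑ i, x k i ω j * x k i ω j') - (T0:ℝ) * Sig k j j'| ≤ (T0:ℝ) * t :=
      fun k => Set.mem_iInter.mp hω k
    have key : ∀ k : Fin d2,
        (T0:ℝ) * (α0 / 2) * ‖Δ k‖ ^ 2 ≤ ∑ i, (∑ j, x k i ω j * Δ k j) ^ 2 := by
      intro k
      have E1 : ∑ i, (∑ j, x k i ω j * Δ k j) ^ 2
          = ∑ j, ∑ j', (Δ k j * Δ k j') * ∑ i, x k i ω j * x k i ω j' := by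
        have e1 : ∀ i : Fin T0, (∑ j, x k i ω j * Δ k j) ^ 2
            = ∑ j, ∑ j', (x k i ω j * Δ k j) * (x k i ω j' * Δ k j') := by
          intro i; rw [sq, Finset.sum_mul_sum]
        rw [Finset.sum_congr rfl fun i _ => e1 i, Finset.sum_comm]
        refine Finset.sum_congr rfl fun j _ => ?_
        rw [Finset.sum_comm]
        refine Finset.sum_congr rfl fun j' _ => ?_
        rw [Finset.mul_sum]
        exact Finset.sum_congr rfl fun i _ => by ring
      have E3 : (T0:ℝ) * (α0 * ‖Δ k‖ ^ 2) ≤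
          ∑ j, ∑ j', (Δ k j * Δ k j') * ((T0:ℝ) * Sig k j j') := by
        have h := hRE k (Δ k) (hΔ k)
        have hrw : ∑ j, ∑ j', (Δ k j * Δ k j') * ((T0:ℝ) * Sig k j j')
            = (T0:ℝ) * ∑ i', ∑ j, Δ k i' * Sig k i' j * Δ k j := by
          rw [Finset.mul_sum]
          refine Finset.sum_congr rfl fun j _ => ?_
          rw [Finset.mul_sum]
          exact Finset.sum_congr rfl fun j' _ => by ring
        rw [hrw]
        exact mul_le_mul_of_nonneg_left h hT0nn
      have E2 : ∑ j, ∑ j', (Δ k j * Δ k j') * ((T0:ℝ) * Sig k j j') -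
            (T0:ℝ) * t * (∑ j, |Δ k j|) ^ 2
          ≤ ∑ j, ∑ j', (Δ k j * Δ k j') * ∑ i, x k i ω j * x k i ω j' := by
        have hexp : (T0:ℝ) * t * (∑ j, |Δ k j|) ^ 2
            = ∑ j, ∑ j', |Δ k j| * |Δ k j'| * ((T0:ℝ) * t) := by
          rw [sq, Finset.sum_mul_sum, Finset.mul_sum]
          refine Finset.sum_congr rfl fun j _ => ?_
          rw [Finset.mul_sum]
          exact Finset.sum_congr rfl fun j' _ => by ring
        rw [hexp, ← Finset.sum_sub_distrib]
        refine Finset.sum_le_sum fun j _ => ?_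
        rw [← Finset.sum_sub_distrib]
        refine Finset.sum_le_sum fun j' _ => ?_
        have habs : |Δ k j * Δ k j' *
            ((∑ i, x k i ω j * x k i ω j') - (T0:ℝ) * Sig k j j')|
            ≤ |Δ k j| * |Δ k j'| * ((T0:ℝ) * t) := by
          rw [abs_mul, abs_mul]
          exact mul_le_mul_of_nonneg_left (hGk k j j') (by positivity)
        have h3 := (neg_le_neg habs).trans (neg_abs_le _)
        have hring : Δ k j * Δ k j' *
            ((∑ i, x k i ω j * x k i ω j') - (T0:ℝ) * Sig k j j')
            = (Δ k j * Δ k j') * (∑ i, x k i ω j * x k i ω j')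
              - (Δ k j * Δ k j') * ((T0:ℝ) * Sig k j j') := by ring
        rw [hring] at h3
        linarith
      -- Cauchy-Schwarz / cone bound
      have hS4 : ∑ j, |Δ k j| ≤ 4 * ∑ j ∈ S, |Δ k j| := by
        have h := hΔ k
        rw [← Finset.sum_add_sum_compl S fun j => |Δ k j|]
        linarith
      have hCS : (∑ j ∈ S, |Δ k j|) ^ 2 ≤ (s:ℝ) * ∑ j ∈ S, Δ k j ^ 2 := by
        have h := sq_sum_le_card_mul_sum_sq (s := S) (f := fun j => |Δ k j|)
        simpa [hcard, sq_abs] using h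
      have hsum_sq : ∑ j ∈ S, Δ k j ^ 2 ≤ ‖Δ k‖ ^ 2 := by
        rw [hnorm]
        exact Finset.sum_le_sum_of_subset_of_nonneg (Finset.subset_univ S)
          fun j _ _ => sq_nonneg _
      have E4 : (∑ j, |Δ k j|) ^ 2 ≤ 16 * s * ‖Δ k‖ ^ 2 := by
        have h0 : (0:ℝ) ≤ ∑ j, |Δ k j| := Finset.sum_nonneg fun j _ => abs_nonneg _
        have h1 : (∑ j, |Δ k j|) ^ 2 ≤ (4 * ∑ j ∈ S, |Δ k j|) ^ 2 :=
          pow_le_pow_left₀ h0 hS4 2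
        have h5 := mul_le_mul_of_nonneg_left hsum_sq hs0.le
        calc (∑ j, |Δ k j|) ^ 2 ≤ (4 * ∑ j ∈ S, |Δ k j|) ^ 2 := h1
        _ = 16 * (∑ j ∈ S, |Δ k j|) ^ 2 := by ring
        _ ≤ 16 * ((s:ℝ) * ∑ j ∈ S, Δ k j ^ 2) := by linarith
        _ ≤ 16 * ((s:ℝ) * ‖Δ k‖ ^ 2) := by linarith
        _ = 16 * s * ‖Δ k‖ ^ 2 := by ring
      have hts : t * (16 * (s:ℝ)) = α0 / 2 := by
        rw [← ht_def, ← hu_def]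
        field_simp
        ring
      have hE4' : (T0:ℝ) * t * (∑ j, |Δ k j|) ^ 2 ≤ (T0:ℝ) * t * (16 * s * ‖Δ k‖ ^ 2) :=
        mul_le_mul_of_nonneg_left E4 (by positivity)
      have hfin : (T0:ℝ) * t * (16 * s * ‖Δ k‖ ^ 2) = (T0:ℝ) * (α0 / 2) * ‖Δ k‖ ^ 2 := by
        rw [show (T0:ℝ) * t * (16 * s * ‖Δ k‖ ^ 2)
          = (T0:ℝ) * (t * (16 * s)) * ‖Δ k‖ ^ 2 from by ring, hts]
      linarith
    have hsumk := Finset.sum_le_sum fun k (_ : k ∈ Finset.univ) => key k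
    rw [show ∑ k, (T0:ℝ) * (α0 / 2) * ‖Δ k‖ ^ 2
      = (T0:ℝ) * (α0 / 2) * ∑ k, ‖Δ k‖ ^ 2 from (Finset.mul_sum _ _ _).symm] at hsumk
    have hT0R : (0:ℝ) < T0 := by exact_mod_cast hT0
    calc (α0 / 4) * ∑ k, ‖Δ k‖ ^ 2
        = (1 / (2 * (T0:ℝ))) * ((T0:ℝ) * (α0 / 2) * ∑ k, ‖Δ k‖ ^ 2) := by
          field_simp
          ring
    _ ≤ (1 / (2 * (T0:ℝ))) * ∑ k, ∑ i, (∑ j, x k i ω j * Δ k j) ^ 2 :=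
        mul_le_mul_of_nonneg_left hsumk (by positivity)
  refine le_trans hGlower ?_
  exact ENNReal.toReal_mono (measure_ne_top μ _) (measure_mono hsubEvent)
end
end
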